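/- arXiv:1109.2380 — 4 statements merged into one kernel-verified Lean document; each statement's English description precedes it below -/
import Mathlib

section
/- Lemma 3.7, specialized to expanding affine maps: Let {(a_i(λ)z+b_i(λ))_{i=1}^m}_{λ∈U} be a continuous expanding affine family over a nonempty bounded open set U ⊆ ℝ^d which satisfies the transversality condition (TC). Let λ₀ ∈ U with s(λ₀) > 2, and let μ be the Bernoulli measure on Σ_m with weight vector (|a_1(λ₀)|^{−s(λ₀)}, …, |a_m(λ₀)|^{−s(λ₀)}) (a probability vector by the definition of s(λ₀)). Then there exists δ > 0 with B(λ₀,δ) ⊆ U such that for Leb_d-almost every λ ∈ B(λ₀,δ): the pushforward measure (π_λ)_*μ on J_λ ⊆ ℂ is absolutely continuous with respect to Leb₂ with Radon–Nikodym density in L²(Leb₂), and Leb₂(J_λ) > 0. -/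
open MeasureTheory Filter Set Metric ENNReal Topology

/-- `affineIter a b ω n = φ_{ω₁} ∘ ⋯ ∘ φ_{ω_n} (0)`, where `φ_i(z) = (z - b i)/(a i)`
is the inverse of the affine map `g_i(z) = a i * z + b i`. -/
noncomputable def affineIter {m : ℕ} (a b : Fin m → ℂ) (ω : ℕ → Fin m) (n : ℕ) : ℂ :=
  (List.range n).foldr (fun k z => (z - b (ω k)) / a (ω k)) 0

/-- The coding map `π(ω) = lim_{n→∞} φ_{ω₁} ∘ ⋯ ∘ φ_{ω_n}(0)`. -/
noncomputable def codingMap {m : ℕ} (a b : Fin m → ℂ) (ω : ℕ → Fin m) : ℂ :=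
  limUnder atTop (affineIter a b ω)

/-- The limit set `J = π(Σ_m)`, i.e. the Julia set of the semigroup `⟨g_1,…,g_m⟩`. -/
noncomputable def limitSet {m : ℕ} (a b : Fin m → ℂ) : Set ℂ :=
  Set.range (codingMap a b)

/-- The transversality condition (TC) for a family of expanding affine systems over `U`:
there is `C₁ > 0` such that for every `r ∈ (0, D]` and all `ω, τ` with distinct first
symbols, `Leb {λ ∈ U : |π_λ(ω) - π_λ(τ)| ≤ r} ≤ C₁ r²`. -/
def TCond {m : ℕ} {E : Type*} [MeasurableSpace E] (μ : Measure E)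
    (U : Set E) (a b : E → Fin m → ℂ) (D : ℝ) : Prop :=
  ∃ C₁ > (0:ℝ), ∀ r ∈ Set.Ioc (0:ℝ) D, ∀ ω τ : ℕ → Fin m, ω 0 ≠ τ 0 →
    μ {l ∈ U | ‖codingMap (a l) (b l) ω - codingMap (a l) (b l) τ‖ ≤ r}
      ≤ ENNReal.ofReal (C₁ * r ^ 2)

/-- The strong transversality condition (STC), with real parameter dimension `d`:
there is `C₁' > 0` such that for every `r ∈ (0, D]` and all `ω, τ` with distinct first
symbols, the set `{λ ∈ U : |π_λ(ω) - π_λ(τ)| ≤ r}` can be covered by at most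
`C₁' r^(2-d)` balls of radius `r`. -/
def STCond {m : ℕ} {E : Type*} [PseudoMetricSpace E]
    (U : Set E) (a b : E → Fin m → ℂ) (D : ℝ) (d : ℝ) : Prop :=
  ∃ C > (0:ℝ), ∀ r ∈ Set.Ioc (0:ℝ) D, ∀ ω τ : ℕ → Fin m, ω 0 ≠ τ 0 →
    ∃ S : Finset E, (S.card : ℝ) ≤ C * r ^ ((2:ℝ) - d) ∧
      {l ∈ U | ‖codingMap (a l) (b l) ω - codingMap (a l) (b l) τ‖ ≤ r}
        ⊆ ⋃ x ∈ S, Metric.closedBall x r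

/-- The analytic transversality condition (ATC) for a holomorphic family of expanding
affine systems: whenever `π_λ(ω) = π_λ(τ)` with `ω₁ ≠ τ₁`, the complex gradient of
`λ ↦ π_λ(ω) - π_λ(τ)` at `λ` is nonzero. -/
def ATCond {m : ℕ} {E : Type*} [NormedAddCommGroup E] [NormedSpace ℂ E]
    (U : Set E) (a b : E → Fin m → ℂ) : Prop :=
  ∀ ω τ : ℕ → Fin m, ω 0 ≠ τ 0 → ∀ l ∈ U,
    codingMap (a l) (b l) ω = codingMap (a l) (b l) τ →
    fderiv ℂ (fun μ => codingMap (a μ) (b μ) ω - codingMap (a μ) (b μ) τ) l ≠ 0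


namespace L37

variable {m : ℕ}

/-- left shift by `n` -/
def shf (n : ℕ) (ω : ℕ → Fin m) : ℕ → Fin m := fun k => ω (k + n)

noncomputable def cmSum (a b : Fin m → ℂ) (ω : ℕ → Fin m) : ℂ :=
  -∑' k : ℕ, b (ω k) / ∏ j ∈ Finset.range (k + 1), a (ω j)

section basic

variable {a b : Fin m → ℂ} {η B : ℝ}

lemma a_ne_zero (hη : 1 < η) (ha : ∀ i, η ≤ ‖a i‖) (i : Fin m) : a i ≠ 0 := by
  intro h
  have := ha i
  rw [h] at this
  simp at this
  linarith

lemma prod_a_ne_zero (hη : 1 < η) (ha : ∀ i, η ≤ ‖a i‖) (ω : ℕ → Fin m)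
    (s : Finset ℕ) : (∏ j ∈ s, a (ω j)) ≠ 0 :=
  Finset.prod_ne_zero_iff.2 fun j _ => a_ne_zero hη ha _

lemma abs_prod_a_ge (hη : 1 < η) (ha : ∀ i, η ≤ ‖a i‖) (ω : ℕ → Fin m) (n : ℕ) :
    η ^ n ≤ ‖∏ j ∈ Finset.range n, a (ω j)‖ := by
  rw [norm_prod]
  calc η ^ n = ∏ _j ∈ Finset.range n, η := by rw [Finset.prod_const, Finset.card_range]
  _ ≤ _ := Finset.prod_le_prod (fun _ _ => by linarith) (fun j _ => ha _)

lemma norm_term_le (hη : 1 < η) (hB : 0 < B) (ha : ∀ i, η ≤ ‖a i‖)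
    (hb : ∀ i, ‖b i‖ ≤ B) (ω : ℕ → Fin m) (k : ℕ) :
    ‖b (ω k) / ∏ j ∈ Finset.range (k + 1), a (ω j)‖ ≤ (B * η⁻¹) * η⁻¹ ^ k := by
  have h0 : (0:ℝ) < η := by linarith
  have hpow : (0:ℝ) < η ^ (k+1) := pow_pos h0 _
  rw [norm_div]
  have h1 : ‖b (ω k)‖ ≤ B := hb _
  have h2 : η ^ (k+1) ≤ ‖∏ j ∈ Finset.range (k + 1), a (ω j)‖ := abs_prod_a_ge hη ha ω (k+1)
  have : ‖b (ω k)‖ / ‖∏ j ∈ Finset.range (k + 1), a (ω j)‖ ≤ B / η ^ (k+1) :=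
    div_le_div₀ (le_of_lt (lt_of_lt_of_le hB (le_refl B))) h1 hpow h2
  calc ‖b (ω k)‖ / ‖∏ j ∈ Finset.range (k + 1), a (ω j)‖ ≤ B / η ^ (k+1) := this
  _ = (B * η⁻¹) * η⁻¹ ^ k := by
      rw [div_eq_mul_inv, ← inv_pow, pow_succ]
      ring

lemma summable_geom_aux (hη : 1 < η) (B : ℝ) : Summable (fun k : ℕ => (B * η⁻¹) * η⁻¹ ^ k) := by
  have h0 : (0:ℝ) < η := by linarith
  exact (summable_geometric_of_lt_one (by positivity) (inv_lt_one_of_one_lt₀ hη)).mul_left _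

lemma summable_term (hη : 1 < η) (hB : 0 < B) (ha : ∀ i, η ≤ ‖a i‖)
    (hb : ∀ i, ‖b i‖ ≤ B) (ω : ℕ → Fin m) :
    Summable (fun k : ℕ => b (ω k) / ∏ j ∈ Finset.range (k + 1), a (ω j)) :=
  Summable.of_norm_bounded (summable_geom_aux hη B) (norm_term_le hη hB ha hb ω)

lemma foldr_affine (hη : 1 < η) (ha : ∀ i, η ≤ ‖a i‖) (ω : ℕ → Fin m) (n : ℕ)
    (z : ℂ) :
    (List.range n).foldr (fun k w => (w - b (ω k)) / a (ω k)) z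
      = z / ∏ j ∈ Finset.range n, a (ω j)
        - ∑ k ∈ Finset.range n, b (ω k) / ∏ j ∈ Finset.range (k + 1), a (ω j) := by
  induction n generalizing z with
  | zero => simp
  | succ n ih =>
    rw [List.range_succ, List.foldr_append]
    simp only [List.foldr_cons, List.foldr_nil]
    rw [ih ((z - b (ω n)) / a (ω n))]
    rw [Finset.sum_range_succ, Finset.prod_range_succ]
    have hP : (∏ j ∈ Finset.range n, a (ω j)) ≠ 0 := prod_a_ne_zero hη ha ω _
    have han : a (ω n) ≠ 0 := a_ne_zero hη ha _
    field_simp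
    ring

lemma affineIter_eq (hη : 1 < η) (ha : ∀ i, η ≤ ‖a i‖) (ω : ℕ → Fin m) (n : ℕ) :
    affineIter a b ω n
      = -∑ k ∈ Finset.range n, b (ω k) / ∏ j ∈ Finset.range (k + 1), a (ω j) := by
  rw [affineIter, foldr_affine hη ha, zero_div, zero_sub]

lemma tendsto_affineIter (hη : 1 < η) (hB : 0 < B) (ha : ∀ i, η ≤ ‖a i‖)
    (hb : ∀ i, ‖b i‖ ≤ B) (ω : ℕ → Fin m) :
    Tendsto (affineIter a b ω) atTop (𝓝 (cmSum a b ω)) := by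
  have h := ((summable_term hη hB ha hb ω).hasSum.tendsto_sum_nat).neg
  have : (fun n => -∑ k ∈ Finset.range n, b (ω k) / ∏ j ∈ Finset.range (k + 1), a (ω j))
      = affineIter a b ω := by
    funext n; rw [affineIter_eq hη ha]
  rwa [this] at h

lemma codingMap_eq (hη : 1 < η) (hB : 0 < B) (ha : ∀ i, η ≤ ‖a i‖)
    (hb : ∀ i, ‖b i‖ ≤ B) : codingMap a b = cmSum a b := by
  funext ω
  exact (tendsto_affineIter hη hB ha hb ω).limUnder_eq

lemma norm_cmSum_le (hη : 1 < η) (hB : 0 < B) (ha : ∀ i, η ≤ ‖a i‖)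
    (hb : ∀ i, ‖b i‖ ≤ B) (ω : ℕ → Fin m) :
    ‖cmSum a b ω‖ ≤ B / (η - 1) := by
  have h0 : (0:ℝ) < η := by linarith
  have hx1 : η⁻¹ < 1 := inv_lt_one_of_one_lt₀ hη
  have hgeom : HasSum (fun k : ℕ => (B * η⁻¹) * η⁻¹ ^ k) ((B * η⁻¹) * (1 - η⁻¹)⁻¹) :=
    (hasSum_geometric_of_lt_one (by positivity) hx1).mul_left _
  have hval : (B * η⁻¹) * (1 - η⁻¹)⁻¹ = B / (η - 1) := by
    have hη0 : η ≠ 0 := ne_of_gt h0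
    have : 1 - η⁻¹ = (η - 1) / η := by field_simp
    rw [this]
    have hη1 : η - 1 ≠ 0 := by intro h; apply absurd hη; rw [sub_eq_zero] at h; simp [← h]
    field_simp
  rw [cmSum, norm_neg]
  exact tsum_of_norm_bounded (hval ▸ hgeom) (norm_term_le hη hB ha hb ω)

lemma dist_cmSum_le (hη : 1 < η) (hB : 0 < B) (ha : ∀ i, η ≤ ‖a i‖)
    (hb : ∀ i, ‖b i‖ ≤ B) (ω τ : ℕ → Fin m) :
    ‖cmSum a b ω - cmSum a b τ‖ ≤ 2 * B / (η - 1) := by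
  have h1 := norm_cmSum_le hη hB ha hb ω
  have h2 := norm_cmSum_le hη hB ha hb τ
  calc ‖cmSum a b ω - cmSum a b τ‖ = ‖cmSum a b ω - cmSum a b τ‖ :=
        rfl
  _ ≤ ‖cmSum a b ω‖ + ‖cmSum a b τ‖ := norm_sub_le _ _
  _ ≤ B / (η - 1) + B / (η - 1) := add_le_add h1 h2
  _ = 2 * B / (η - 1) := by ring

lemma cmSum_shift (hη : 1 < η) (hB : 0 < B) (ha : ∀ i, η ≤ ‖a i‖)
    (hb : ∀ i, ‖b i‖ ≤ B) (ω : ℕ → Fin m) :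
    cmSum a b ω = (cmSum a b (shf 1 ω) - b (ω 0)) / a (ω 0) := by
  have h0 : a (ω 0) ≠ 0 := a_ne_zero hη ha _
  have hsum := summable_term hη hB ha hb ω
  have key : ∀ k : ℕ, b (ω (k+1)) / ∏ j ∈ Finset.range (k + 2), a (ω j)
      = (b (shf 1 ω k) / ∏ j ∈ Finset.range (k + 1), a (shf 1 ω j)) * (a (ω 0))⁻¹ := by
    intro k
    have : ∏ j ∈ Finset.range (k + 2), a (ω j)
        = (∏ j ∈ Finset.range (k + 1), a (ω (j + 1))) * a (ω 0) :=
      Finset.prod_range_succ' (fun j => a (ω j)) (k+1)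
    rw [this]
    have : (fun j => a (ω (j+1))) = fun j => a (shf 1 ω j) := rfl
    simp only [shf]
    rw [div_mul_eq_div_div, div_eq_mul_inv]
  rw [cmSum, hsum.tsum_eq_zero_add]
  simp only [key]
  rw [tsum_mul_right]
  have : (∑' k, b (shf 1 ω k) / ∏ j ∈ Finset.range (k + 1), a (shf 1 ω j))
      = -cmSum a b (shf 1 ω) := by rw [cmSum, neg_neg]
  rw [this]
  field_simp
  try ring
  try rw [sub_eq_add_neg]
  simp [Finset.prod_range_one, h0]

lemma shf_shf (n : ℕ) (ω : ℕ → Fin m) : shf n (shf 1 ω) = shf (n+1) ω := by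
  funext k
  have h : k + n + 1 = k + (n + 1) := by omega
  simp only [shf, h]


lemma shf_zero (ω : ℕ → Fin m) : shf 0 ω = ω := by funext k; simp [shf]

lemma cmSum_sub_shift (hη : 1 < η) (hB : 0 < B) (ha : ∀ i, η ≤ ‖a i‖)
    (hb : ∀ i, ‖b i‖ ≤ B) :
    ∀ (n : ℕ) (ω τ : ℕ → Fin m), (∀ k < n, ω k = τ k) →
    cmSum a b ω - cmSum a b τ
      = (cmSum a b (shf n ω) - cmSum a b (shf n τ)) / ∏ k ∈ Finset.range n, a (ω k) := by
  intro n
  induction n with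
  | zero => intro ω τ _; simp [shf_zero]
  | succ n ih =>
    intro ω τ hagree
    have h0 : ω 0 = τ 0 := hagree 0 (Nat.succ_pos n)
    have ha0 : a (ω 0) ≠ 0 := a_ne_zero hη ha _
    have step : cmSum a b ω - cmSum a b τ
        = (cmSum a b (shf 1 ω) - cmSum a b (shf 1 τ)) / a (ω 0) := by
      rw [cmSum_shift hη hB ha hb ω, cmSum_shift hη hB ha hb τ, ← h0]
      rw [div_sub_div_same]
      congr 1
      ring
    have hagree' : ∀ k < n, shf 1 ω k = shf 1 τ k := by
      intro k hk; exact hagree (k+1) (by omega)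
    rw [step, ih (shf 1 ω) (shf 1 τ) hagree', shf_shf, shf_shf]
    have hprod : ∏ k ∈ Finset.range (n+1), a (ω k)
        = (∏ k ∈ Finset.range n, a (ω (k+1))) * a (ω 0) :=
      Finset.prod_range_succ' (fun k => a (ω k)) n
    rw [hprod]
    have : (∏ k ∈ Finset.range n, a (shf 1 ω k)) = ∏ k ∈ Finset.range n, a (ω (k+1)) := rfl
    rw [this, div_div]

lemma abs_cmSum_sub (hη : 1 < η) (hB : 0 < B) (ha : ∀ i, η ≤ ‖a i‖)
    (hb : ∀ i, ‖b i‖ ≤ B) (n : ℕ) (ω τ : ℕ → Fin m) (hagree : ∀ k < n, ω k = τ k) :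
    ‖cmSum a b ω - cmSum a b τ‖ * ∏ k ∈ Finset.range n, ‖a (ω k)‖
      = ‖cmSum a b (shf n ω) - cmSum a b (shf n τ)‖ := by
  rw [cmSum_sub_shift hη hB ha hb n ω τ hagree, norm_div, norm_prod]
  have hpos : (0:ℝ) < ∏ k ∈ Finset.range n, ‖a (ω k)‖ :=
    Finset.prod_pos fun k _ => lt_of_lt_of_le (by linarith) (ha _)
  field_simp

lemma continuous_cmSum (hη : 1 < η) (hB : 0 < B) (ha : ∀ i, η ≤ ‖a i‖)
    (hb : ∀ i, ‖b i‖ ≤ B) : Continuous (cmSum a b) := by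
  apply Continuous.neg
  apply continuous_tsum
    (f := fun k (ω : ℕ → Fin m) => b (ω k) / ∏ j ∈ Finset.range (k + 1), a (ω j))
  · intro k
    apply Continuous.div
    · exact Continuous.comp continuous_of_discreteTopology (continuous_apply k)
    · apply continuous_finset_prod
      intro j _
      exact Continuous.comp continuous_of_discreteTopology (continuous_apply j)
    · intro ω
      exact prod_a_ne_zero hη ha ω _
  · exact summable_geom_aux hη B
  · intro k ω
    exact norm_term_le hη hB ha hb ω k

end basic




lemma aemeasurable_lintegral_right {α β : Type*} [MeasurableSpace α] [MeasurableSpace β]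
    {μ : Measure α} {ν : Measure β} [SFinite ν] {f : α × β → ℝ≥0∞}
    (hf : AEMeasurable f (μ.prod ν)) :
    AEMeasurable (fun x => ∫⁻ y, f (x, y) ∂ν) μ := by
  obtain ⟨g, hg, hfg⟩ := hf
  refine ⟨fun x => ∫⁻ y, g (x, y) ∂ν, hg.lintegral_prod_right', ?_⟩
  filter_upwards [Measure.ae_ae_of_ae_prod hfg] with x hx
  exact lintegral_congr_ae hx

lemma aemeasurable_liminf' {α : Type*} [MeasurableSpace α] {μ : Measure α} {f : ℕ → α → ℝ≥0∞}
    (hf : ∀ n, AEMeasurable (f n) μ) :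
    AEMeasurable (fun x => Filter.liminf (fun n => f n x) Filter.atTop) μ := by
  choose g hg hfg using hf
  refine ⟨fun x => liminf (fun n => g n x) atTop, Measurable.liminf hg, ?_⟩
  filter_upwards [ae_all_iff.2 hfg] with x hx
  rw [show (fun n => f n x) = fun n => g n x from funext hx]

lemma sum_prod_pow {m : ℕ} (t : Fin m → ℝ≥0∞) (n : ℕ) :
    ∑ w : Fin n → Fin m, ∏ i, t (w i) = (∑ j, t j) ^ n := by
  induction n with
  | zero => simp
  | succ n ih =>
    calc ∑ w : Fin (n+1) → Fin m, ∏ i, t (w i)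
        = ∑ q : Fin m × (Fin n → Fin m), ∏ i, t ((Fin.consEquiv fun _ => Fin m) q i) :=
          (Fintype.sum_equiv (Fin.consEquiv fun _ => Fin m) _ _ (fun q => rfl)).symm
      _ = ∑ q : Fin m × (Fin n → Fin m), t q.1 * ∏ i : Fin n, t (q.2 i) := by
          refine Finset.sum_congr rfl fun q _ => ?_
          rw [Fin.prod_univ_succ]
          simp [Fin.consEquiv]
      _ = (∑ j, t j) * ∑ w : Fin n → Fin m, ∏ i, t (w i) := by
          rw [Fintype.sum_prod_type]
          simp only [← Finset.mul_sum]
          rw [← Finset.sum_mul]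
      _ = (∑ j, t j) ^ (n+1) := by rw [ih, pow_succ]; ring





lemma measurable_measure_closedBall (ν : MeasureTheory.Measure ℂ) [SFinite ν] (r : ℝ) :
    Measurable fun z : ℂ => ν (Metric.closedBall z r) := by
  have hs : MeasurableSet {p : ℂ × ℂ | dist p.2 p.1 ≤ r} :=
    (isClosed_le (continuous_dist.comp (continuous_snd.prodMk continuous_fst))
      continuous_const).measurableSet
  have hset : ∀ z : ℂ, Metric.closedBall z r
      = Prod.mk z ⁻¹' {p : ℂ × ℂ | dist p.2 p.1 ≤ r} := by
    intro z; ext y; simp [Metric.mem_closedBall]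
  simp_rw [hset]
  exact measurable_measure_prodMk_left hs

lemma absCont_and_L2 (ν : Measure ℂ) [IsProbabilityMeasure ν] {D : ℝ} (hD : 0 < D)
    (hfin : Filter.liminf (fun n : ℕ =>
        (∫⁻ z, ν (Metric.closedBall z (D / 2 ^ n)) ∂ν) * (ENNReal.ofReal ((D / 2 ^ n) ^ 2))⁻¹)
      Filter.atTop < ⊤) :
    ν ≪ (volume : Measure ℂ) ∧
      MemLp (fun z => (ν.rnDeriv volume z).toReal) 2 (volume : Measure ℂ) := by
  set u : ℕ → ℝ := fun n => D / 2 ^ n with hu_def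
  have hu : ∀ n, 0 < u n := fun n => by positivity
  set q : ℕ → ℝ≥0∞ := fun n => ENNReal.ofReal ((u n) ^ 2) with hq_def
  have hq0 : ∀ n, q n ≠ 0 := fun n => (ENNReal.ofReal_pos.2 (by positivity)).ne'
  have hqtop : ∀ n, q n ≠ ⊤ := fun n => ENNReal.ofReal_ne_top
  set c : ℝ≥0∞ := volume (Metric.closedBall (0:ℂ) 1) with hc_def
  have hc0 : c ≠ 0 := (measure_closedBall_pos _ _ one_pos).ne'
  have hctop : c ≠ ⊤ := measure_closedBall_lt_top.ne
  have hvol : ∀ (z : ℂ) (r : ℝ), 0 ≤ r →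
      volume (Metric.closedBall z r) = ENNReal.ofReal (r ^ 2) * c := by
    intro z r hr
    rw [Measure.addHaar_closedBall' volume z hr, Complex.finrank_real_complex, hc_def]
  have hmb : ∀ r : ℝ, Measurable fun z : ℂ => ν (Metric.closedBall z r) := by
    intro r
    have hs : MeasurableSet {p : ℂ × ℂ | dist p.2 p.1 ≤ r} :=
      (isClosed_le (continuous_dist.comp (continuous_snd.prodMk continuous_fst))
        continuous_const).measurableSet
    have hset : ∀ z : ℂ, Metric.closedBall z r
        = Prod.mk z ⁻¹' {p : ℂ × ℂ | dist p.2 p.1 ≤ r} := by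
      intro z; ext y; simp [Metric.mem_closedBall]
    simp_rw [hset]
    exact measurable_measure_prodMk_left hs
  set W : ℂ → ℝ≥0∞ := fun z =>
    Filter.liminf (fun n => ν (Metric.closedBall z (u n)) * (q n)⁻¹) Filter.atTop with hW_def
  have hWmeas : Measurable W :=
    Measurable.liminf fun n => (hmb (u n)).mul_const _
  have hWint : ∫⁻ z, W z ∂ν < ⊤ := by
    calc ∫⁻ z, W z ∂ν
        ≤ liminf (fun n => ∫⁻ z, ν (Metric.closedBall z (u n)) * (q n)⁻¹ ∂ν) atTop :=
          lintegral_liminf_le fun n => (hmb (u n)).mul_const _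
      _ = liminf (fun n =>
            (∫⁻ z, ν (Metric.closedBall z (u n)) ∂ν) * (q n)⁻¹) atTop := by
          apply congrArg (fun f => liminf f atTop)
          funext n
          exact lintegral_mul_const _ (hmb (u n))
      _ < ⊤ := hfin
  have hWtop : ν {z | W z = ⊤} = 0 := by
    have h := ae_lt_top hWmeas hWint.ne
    rw [MeasureTheory.ae_iff] at h
    convert h using 2
    ext z
    simp [lt_top_iff_ne_top]
  -- absolute continuity
  have hac : ν ≪ (volume : Measure ℂ) := by
    refine Measure.AbsolutelyContinuous.mk fun E hE hE0 => ?_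
    have key : ∀ M : ℕ, ν (E ∩ {z | W z < (M:ℝ≥0∞)}) = 0 := by
      intro M
      set s := E ∩ {z | W z < (M:ℝ≥0∞)} with hs_def
      set k : ℝ≥0∞ := (M:ℝ≥0∞) * c⁻¹ with hk_def
      have hktop : k ≠ ⊤ :=
        ENNReal.mul_ne_top (ENNReal.natCast_ne_top M) (ENNReal.inv_ne_top.2 hc0)
      have hball : ∀ z ∈ s, ∃ᶠ n in atTop,
          ν (Metric.closedBall z (u n)) ≤ k * volume (Metric.closedBall z (u n)) := by
        intro z hz
        have hfr : ∃ᶠ n in atTop, ν (Metric.closedBall z (u n)) * (q n)⁻¹ < (M:ℝ≥0∞) :=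
          frequently_lt_of_liminf_lt (by isBoundedDefault) hz.2
        refine hfr.mono fun n hn => ?_
        have hx : ν (Metric.closedBall z (u n))
            = ν (Metric.closedBall z (u n)) * (q n)⁻¹ * q n := by
          rw [mul_assoc, ENNReal.inv_mul_cancel (hq0 n) (hqtop n), mul_one]
        have h1 : ν (Metric.closedBall z (u n)) ≤ (M:ℝ≥0∞) * q n := by
          rw [hx]; exact mul_le_mul_left hn.le _
        have h2 : k * volume (Metric.closedBall z (u n)) = (M:ℝ≥0∞) * q n := by
          rw [hvol z (u n) (hu n).le]
          calc k * (ENNReal.ofReal ((u n)^2) * c) = (M:ℝ≥0∞) * q n * (c⁻¹ * c) := by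
                rw [hk_def, hq_def]; ring
            _ = (M:ℝ≥0∞) * q n := by rw [ENNReal.inv_mul_cancel hc0 hctop, mul_one]
        rw [h2]; exact h1
      have hbound : ∀ ε : ℝ≥0∞, 0 < ε → ν s ≤ k * ε := by
        intro ε hε
        obtain ⟨O, hEO, hOopen, hOvol⟩ := Set.exists_isOpen_lt_of_lt E ε (by rw [hE0]; exact hε)
        set f : ℂ → Set ℝ := fun z => {r : ℝ | 0 < r ∧ Metric.closedBall z r ⊆ O ∧
          ν (Metric.closedBall z r) ≤ k * volume (Metric.closedBall z r)} with hf_def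
        have hulim : Tendsto u atTop (𝓝 0) := by
          have : u = fun n : ℕ => D * (1/2 : ℝ) ^ n := by
            funext n
            show D / 2 ^ n = D * (1/2:ℝ) ^ n
            rw [one_div, inv_pow, div_eq_mul_inv]
          rw [this]
          simpa using (tendsto_pow_atTop_nhds_zero_of_lt_one (by norm_num)
            (by norm_num : (1/2:ℝ) < 1)).const_mul D
        have hf : ∀ z ∈ s, ∀ δ > 0, (f z ∩ Ioo 0 δ).Nonempty := by
          intro z hz δ hδ
          obtain ⟨ρ, hρpos, hρO⟩ := Metric.isOpen_iff.1 hOopen z (hEO hz.1)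
          have hsmall : ∀ᶠ n in atTop, u n < min δ ρ := by
            have := hulim.eventually (eventually_lt_nhds (lt_min hδ hρpos))
            simpa using this
          obtain ⟨n, hn1, hn2⟩ := ((hball z hz).and_eventually hsmall).exists
          refine ⟨u n, ⟨hu n, ?_, hn1⟩, hu n, lt_of_lt_of_le hn2 (min_le_left _ _)⟩
          exact (Metric.closedBall_subset_ball (lt_of_lt_of_le hn2 (min_le_right _ _))).trans hρO
        obtain ⟨t, r, htc, hts, htr, htcov, htdisj⟩ :=
          Besicovitch.exists_disjoint_closedBall_covering_ae ν f s hf (fun _ => 1)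
            (fun _ _ => one_pos)
        have hsub : s ⊆ (s \ ⋃ x ∈ t, Metric.closedBall x (r x)) ∪
            ⋃ x ∈ t, Metric.closedBall x (r x) := by
          intro z hz
          by_cases h : z ∈ ⋃ x ∈ t, Metric.closedBall x (r x)
          · exact Or.inr h
          · exact Or.inl ⟨hz, h⟩
        calc ν s ≤ ν (s \ ⋃ x ∈ t, Metric.closedBall x (r x)) +
              ν (⋃ x ∈ t, Metric.closedBall x (r x)) :=
              (measure_mono hsub).trans (measure_union_le _ _)
          _ = ν (⋃ x ∈ t, Metric.closedBall x (r x)) := by rw [htcov, zero_add]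
          _ ≤ ∑' x : t, ν (Metric.closedBall (x:ℂ) (r (x:ℂ))) := measure_biUnion_le ν htc _
          _ ≤ ∑' x : t, k * volume (Metric.closedBall (x:ℂ) (r (x:ℂ))) := by
              refine ENNReal.tsum_le_tsum fun x => ?_
              exact (htr x x.2).1.2.2
          _ = k * ∑' x : t, volume (Metric.closedBall (x:ℂ) (r (x:ℂ))) := ENNReal.tsum_mul_left
          _ = k * volume (⋃ x ∈ t, Metric.closedBall x (r x)) := by
              rw [measure_biUnion htc htdisj (fun x _ => measurableSet_closedBall)]
          _ ≤ k * volume O := by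
              refine mul_le_mul_right (measure_mono ?_) k
              refine iUnion₂_subset fun x hx => (htr x hx).1.2.1
          _ ≤ k * ε := mul_le_mul_right hOvol.le k
      -- let ε → 0
      have htend : Tendsto (fun j : ℕ => k * ENNReal.ofReal (1/(j+1) : ℝ)) atTop (𝓝 0) := by
        have h0 : Tendsto (fun j : ℕ => ENNReal.ofReal (1/(j+1) : ℝ)) atTop (𝓝 0) := by
          rw [show (0:ℝ≥0∞) = ENNReal.ofReal 0 by simp]
          exact ENNReal.tendsto_ofReal tendsto_one_div_add_atTop_nhds_zero_nat
        simpa using ENNReal.Tendsto.const_mul h0 (Or.inr hktop)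
      have hle : ∀ j : ℕ, ν s ≤ k * ENNReal.ofReal (1/(j+1) : ℝ) := fun j =>
        hbound _ (ENNReal.ofReal_pos.2 (by positivity))
      exact le_antisymm (ge_of_tendsto' htend hle) zero_le
    have hcover : E ⊆ (E ∩ {z | W z = ⊤}) ∪ ⋃ M : ℕ, E ∩ {z | W z < (M:ℝ≥0∞)} := by
      intro z hz
      by_cases h : W z = ⊤
      · exact Or.inl ⟨hz, h⟩
      · obtain ⟨M, hM⟩ := ENNReal.exists_nat_gt h
        exact Or.inr (mem_iUnion.2 ⟨M, hz, hM⟩)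
    refine le_antisymm ?_ zero_le
    calc ν E ≤ ν (E ∩ {z | W z = ⊤}) + ν (⋃ M : ℕ, E ∩ {z | W z < (M:ℝ≥0∞)}) :=
          (measure_mono hcover).trans (measure_union_le _ _)
      _ ≤ 0 + ∑' M : ℕ, ν (E ∩ {z | W z < (M:ℝ≥0∞)}) :=
          add_le_add (le_of_eq (measure_mono_null inter_subset_right hWtop))
            (measure_iUnion_le _)
      _ = 0 := by simp [key]
  -- the L² estimate
  refine ⟨hac, ?_⟩
  have hf := Measure.measurable_rnDeriv ν (volume : Measure ℂ)
  have hulim : Tendsto u atTop (𝓝 0) := by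
    have : u = fun n : ℕ => D * (1/2 : ℝ) ^ n := by
      funext n
      show D / 2 ^ n = D * (1/2:ℝ) ^ n
      rw [one_div, inv_pow, div_eq_mul_inv]
    rw [this]
    simpa using (tendsto_pow_atTop_nhds_zero_of_lt_one (by norm_num)
      (by norm_num : (1/2:ℝ) < 1)).const_mul D
  have hulim0 : Tendsto u atTop (𝓝[Set.Ioi (0:ℝ)] 0) := by
    rw [tendsto_nhdsWithin_iff]
    exact ⟨hulim, Eventually.of_forall fun n => hu n⟩
  have hWrn : ∀ᵐ x ∂(volume : Measure ℂ), W x = ν.rnDeriv volume x * c := by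
    filter_upwards [Besicovitch.ae_tendsto_rnDeriv ν (volume : Measure ℂ)] with x hx
    have hx2 : Tendsto (fun n =>
        ν (Metric.closedBall x (u n)) / volume (Metric.closedBall x (u n))) atTop
        (𝓝 (ν.rnDeriv volume x)) := hx.comp hulim0
    have heq : (fun n => ν (Metric.closedBall x (u n)) * (q n)⁻¹)
        = fun n => (ν (Metric.closedBall x (u n)) / volume (Metric.closedBall x (u n))) * c := by
      funext n
      calc ν (Metric.closedBall x (u n)) * (q n)⁻¹
          = ν (Metric.closedBall x (u n)) * ((q n)⁻¹ * (c⁻¹ * c)) := by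
            rw [ENNReal.inv_mul_cancel hc0 hctop, mul_one]
        _ = ν (Metric.closedBall x (u n)) * (q n * c)⁻¹ * c := by
            rw [ENNReal.mul_inv (Or.inl (hq0 n)) (Or.inl (hqtop n))]; ring
        _ = ν (Metric.closedBall x (u n)) / volume (Metric.closedBall x (u n)) * c := by
            rw [div_eq_mul_inv, hq_def, ← hvol x (u n) (hu n).le]
    have hlim2 : Tendsto (fun n => ν (Metric.closedBall x (u n)) * (q n)⁻¹) atTop
        (𝓝 (ν.rnDeriv volume x * c)) := by
      rw [heq]
      exact ENNReal.Tendsto.mul_const hx2 (Or.inr hctop)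
    exact hlim2.liminf_eq
  have hint2 : ∫⁻ x, (ν.rnDeriv volume x) ^ 2 ∂(volume : Measure ℂ) < ⊤ := by
    have h2 : ∫⁻ x, W x * ν.rnDeriv volume x ∂(volume : Measure ℂ) = ∫⁻ z, W z ∂ν := by
      conv_rhs => rw [← Measure.withDensity_rnDeriv_eq ν (volume : Measure ℂ) hac]
      rw [lintegral_withDensity_eq_lintegral_mul (volume : Measure ℂ) hf hWmeas]
      exact lintegral_congr fun x => mul_comm _ _
    have h1 : ∫⁻ x, (ν.rnDeriv volume x) ^ 2 ∂(volume : Measure ℂ)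
        ≤ c⁻¹ * ∫⁻ x, W x * ν.rnDeriv volume x ∂(volume : Measure ℂ) := by
      rw [← lintegral_const_mul' _ _ (ENNReal.inv_ne_top.2 hc0)]
      refine lintegral_mono_ae ?_
      filter_upwards [hWrn] with x hx
      refine le_of_eq ?_
      rw [hx, pow_two]
      calc ν.rnDeriv volume x * ν.rnDeriv volume x
          = (c⁻¹ * c) * (ν.rnDeriv volume x * ν.rnDeriv volume x) := by
            rw [ENNReal.inv_mul_cancel hc0 hctop, one_mul]
        _ = c⁻¹ * (ν.rnDeriv volume x * c * ν.rnDeriv volume x) := by ring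
    calc ∫⁻ x, (ν.rnDeriv volume x) ^ 2 ∂(volume : Measure ℂ)
        ≤ c⁻¹ * ∫⁻ z, W z ∂ν := by rw [← h2]; exact h1
      _ < ⊤ := ENNReal.mul_lt_top (ENNReal.inv_lt_top.2 (pos_iff_ne_zero.2 hc0)) hWint
  constructor
  · exact hf.ennreal_toReal.aestronglyMeasurable
  · rw [eLpNorm_eq_lintegral_rpow_enorm_toReal (by norm_num) (by norm_num)]
    refine ENNReal.rpow_lt_top_of_nonneg (by positivity) ?_
    have hcongr : ∀ᵐ x ∂(volume : Measure ℂ),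
        ‖(ν.rnDeriv volume x).toReal‖ₑ ^ ((2:ℝ≥0∞).toReal)
          = (ν.rnDeriv volume x) ^ 2 := by
      filter_upwards [Measure.rnDeriv_lt_top ν (volume : Measure ℂ)] with x hx
      have hco : ‖(ν.rnDeriv volume x).toReal‖ₑ = ν.rnDeriv volume x := by
        rw [Real.enorm_eq_ofReal ENNReal.toReal_nonneg,
          ENNReal.ofReal_toReal hx.ne]
      rw [hco, show ((2:ℝ≥0∞).toReal) = ((2:ℕ):ℝ) by simp, ENNReal.rpow_natCast]
    rw [lintegral_congr_ae hcongr]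
    exact hint2.ne

end L37


set_option maxHeartbeats 1600000

/-- **Lemma 3.7** (expanding affine case). Let a continuous expanding affine family over a
nonempty bounded open `U ⊆ ℝ^d` satisfy the transversality condition, let `λ₀ ∈ U` with
`s(λ₀) > 2`, and let `μ` be the Bernoulli measure on `Σ_m` with weights
`(|a_i(λ₀)|^{-s(λ₀)})_i` (characterized by its values on cylinder sets). Then there is
`δ > 0` with `B(λ₀,δ) ⊆ U` such that for Lebesgue-a.e. `λ ∈ B(λ₀,δ)` the pushforward
`(π_λ)_* μ` is absolutely continuous w.r.t. `Leb₂` with density in `L²`, and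
`Leb₂(J_λ) > 0`. -/
theorem stmt4 {m d : ℕ} (hm : 2 ≤ m)
    (U : Set (EuclideanSpace ℝ (Fin d))) (hUo : IsOpen U) (hUne : U.Nonempty)
    (hUbd : Bornology.IsBounded U)
    (a b : EuclideanSpace ℝ (Fin d) → Fin m → ℂ)
    (ha : ∀ i, ContinuousOn (fun l => a l i) U)
    (hb : ∀ i, ContinuousOn (fun l => b l i) U)
    (η B : ℝ) (hη : 1 < η) (hB : 0 < B)
    (haη : ∀ l ∈ U, ∀ i, η ≤ ‖a l i‖)
    (hbB : ∀ l ∈ U, ∀ i, ‖b l i‖ ≤ B)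
    (s : EuclideanSpace ℝ (Fin d) → ℝ)
    (hs : ∀ l ∈ U, 0 ≤ s l ∧ ∑ i, ‖a l i‖ ^ (-(s l)) = 1)
    (hTC : TCond volume U a b (2 * B / (η - 1)))
    (l₀ : EuclideanSpace ℝ (Fin d)) (hl₀ : l₀ ∈ U) (hs₀ : 2 < s l₀)
    (μ : Measure (ℕ → Fin m))
    (hμ : ∀ (n : ℕ) (c : ℕ → Fin m),
      μ {ω | ∀ k < n, ω k = c k}
        = ENNReal.ofReal (∏ k ∈ Finset.range n, ‖a l₀ (c k)‖ ^ (-(s l₀)))) :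
    ∃ δ > (0:ℝ), Metric.ball l₀ δ ⊆ U ∧
      ∀ᵐ l ∂(volume.restrict (Metric.ball l₀ δ)),
        (μ.map (codingMap (a l) (b l))) ≪ (volume : Measure ℂ) ∧
        MemLp (fun z => ((μ.map (codingMap (a l) (b l))).rnDeriv volume z).toReal)
          2 (volume : Measure ℂ) ∧
        0 < volume (limitSet (a l) (b l)) := by
  classical
  haveI : NeZero m := ⟨by omega⟩
  -- μ is a probability measure
  have hμuniv : μ Set.univ = 1 := by
    have h := hμ 0 (fun _ => (0 : Fin m))
    have heq : {ω : ℕ → Fin m | ∀ k < 0, ω k = (fun _ => (0:Fin m)) k} = Set.univ := by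
      ext ω; simp
    rw [heq] at h
    simpa using h
  haveI hμprob : IsProbabilityMeasure μ := ⟨hμuniv⟩
  obtain ⟨C₁, hC₁pos, hTC'⟩ := hTC
  have hη1 : (0:ℝ) < η - 1 := by linarith
  set D : ℝ := 2 * B / (η - 1) with hD_def
  have hDpos : 0 < D := by positivity
  -- the weights
  set ca : Fin m → ℝ := fun i => ‖a l₀ i‖ with hca_def
  set p : Fin m → ℝ := fun i => ca i ^ (-(s l₀)) with hp_def
  have hca1 : ∀ i, 1 < ca i := fun i => lt_of_lt_of_le hη (haη l₀ hl₀ i)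
  have hca0 : ∀ i, (0:ℝ) < ca i := fun i => lt_trans one_pos (hca1 i)
  have hp_pos : ∀ i, 0 < p i := fun i => Real.rpow_pos_of_pos (hca0 i) _
  have hplt1 : ∀ i, p i < 1 := fun i =>
    Real.rpow_lt_one_of_one_lt_of_neg (hca1 i) (by linarith)
  have hsum1 : ∑ i, p i = 1 := (hs l₀ hl₀).2
  -- θ₀ < 1
  have hkey : ∀ i, p i ^ 2 * ca i ^ 2 = ca i ^ (-(s l₀)) * ca i ^ ((2:ℝ) - s l₀) := by
    intro i
    have h0 : (0:ℝ) < ca i := hca0 i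
    have e1 : p i ^ 2 = ca i ^ (-(s l₀) * 2) := by
      simp only [hp_def]
      rw [← Real.rpow_natCast (ca i ^ (-(s l₀))) 2, ← Real.rpow_mul h0.le]
      norm_num
    have e2 : ca i ^ 2 = ca i ^ ((2:ℕ):ℝ) := (Real.rpow_natCast _ 2).symm
    rw [e1, e2, ← Real.rpow_add h0, ← Real.rpow_add h0]
    congr 1
    push_cast; ring
  have hθ₀ : ∑ i, p i ^ 2 * ca i ^ 2 < 1 := by
    calc ∑ i, p i ^ 2 * ca i ^ 2
        = ∑ i, ca i ^ (-(s l₀)) * ca i ^ ((2:ℝ) - s l₀) := by simp_rw [hkey]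
      _ < ∑ i, p i := by
          refine Finset.sum_lt_sum_of_nonempty Finset.univ_nonempty fun i _ => ?_
          have h1 : ca i ^ ((2:ℝ) - s l₀) < 1 :=
            Real.rpow_lt_one_of_one_lt_of_neg (hca1 i) (by linarith)
          calc ca i ^ (-(s l₀)) * ca i ^ ((2:ℝ) - s l₀)
              < ca i ^ (-(s l₀)) * 1 := by
                exact mul_lt_mul_of_pos_left h1 (Real.rpow_pos_of_pos (hca0 i) _)
            _ = p i := by rw [mul_one]
      _ = 1 := hsum1
  -- choose ε with ∑ p i ^2 (ca i + ε)^2 < 1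
  have hFcont : Continuous (fun ε : ℝ => ∑ i, p i ^ 2 * (ca i + ε) ^ 2) := by
    refine continuous_finset_sum _ fun i _ => ?_
    exact continuous_const.mul ((continuous_const.add continuous_id).pow 2)
  have hFev : ∀ᶠ ε in 𝓝 (0:ℝ), (∑ i, p i ^ 2 * (ca i + ε) ^ 2) < 1 := by
    have h0 : (∑ i, p i ^ 2 * (ca i + 0) ^ 2) < 1 := by simpa using hθ₀
    exact hFcont.continuousAt.eventually_lt_const h0
  obtain ⟨ε', hε'pos, hε'⟩ := Metric.eventually_nhds_iff.1 hFev
  set ε : ℝ := ε' / 2 with hε_def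
  have hεpos : 0 < ε := by positivity
  have hθlt : (∑ i, p i ^ 2 * (ca i + ε) ^ 2) < 1 := by
    apply hε'
    rw [Real.dist_eq]
    rw [sub_zero, abs_of_pos hεpos]
    rw [hε_def]; linarith
  set θ : ℝ := ∑ i, p i ^ 2 * (ca i + ε) ^ 2 with hθ_def
  have hθ0 : 0 ≤ θ := Finset.sum_nonneg fun i _ => by positivity
  -- choose δ
  have hU_nhds : U ∈ 𝓝 l₀ := hUo.mem_nhds hl₀
  have haev : ∀ᶠ l in 𝓝 l₀, ∀ i, ‖a l i‖ < ca i + ε := by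
    rw [eventually_all]
    intro i
    have hcont : ContinuousAt (fun l => ‖a l i‖) l₀ :=
      continuous_norm.continuousAt.comp ((ha i).continuousAt hU_nhds)
    exact hcont.eventually_lt_const (by have := hca1 i; simp only [hca_def]; linarith)
  obtain ⟨δ, hδpos, hδball⟩ := Metric.mem_nhds_iff.1 (Filter.inter_mem hU_nhds haev)
  have hBU : Metric.ball l₀ δ ⊆ U := fun l hl => (hδball hl).1
  have hBa : ∀ l ∈ Metric.ball l₀ δ, ∀ i, ‖a l i‖ ≤ ca i + ε :=
    fun l hl i => ((hδball hl).2 i).le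
  -- measures
  set lm : Measure (EuclideanSpace ℝ (Fin d)) := volume.restrict (Metric.ball l₀ δ) with hlm
  haveI : IsFiniteMeasure lm := by
    constructor
    rw [hlm, Measure.restrict_apply_univ]
    exact measure_ball_lt_top
  -- joint a.e.-measurability of the coding maps
  have hABmeas : ∀ (proj : (EuclideanSpace ℝ (Fin d)) × ((ℕ → Fin m) × (ℕ → Fin m)) → (ℕ → Fin m)),
      Measurable proj →
      AEMeasurable (fun x => L37.cmSum (a x.1) (b x.1) (proj x)) (lm.prod (μ.prod μ)) := by
    intro proj hproj
    have hqmp : Measure.QuasiMeasurePreserving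
        (Prod.fst : (EuclideanSpace ℝ (Fin d)) × ((ℕ → Fin m) × (ℕ → Fin m)) → _)
        (lm.prod (μ.prod μ)) lm :=
      Measure.quasiMeasurePreserving_fst
    have hcoef : ∀ (g : EuclideanSpace ℝ (Fin d) → Fin m → ℂ),
        (∀ i, ContinuousOn (fun l => g l i) U) → ∀ k : ℕ,
        AEMeasurable (fun x : (EuclideanSpace ℝ (Fin d)) × ((ℕ → Fin m) × (ℕ → Fin m)) =>
          g x.1 (proj x k)) (lm.prod (μ.prod μ)) := by
      intro g hg k
      have hrw : (fun x : (EuclideanSpace ℝ (Fin d)) × ((ℕ → Fin m) × (ℕ → Fin m)) =>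
          g x.1 (proj x k)) = fun x => ∑ i : Fin m,
            ({x : (EuclideanSpace ℝ (Fin d)) × ((ℕ → Fin m) × (ℕ → Fin m)) | proj x k = i}).indicator
              (fun x => g x.1 i) x := by
        funext x
        simp only [Set.indicator_apply, Set.mem_setOf_eq]
        rw [Finset.sum_ite_eq Finset.univ (proj x k) (fun i => g x.1 i)]
        simp
      rw [hrw]
      refine Finset.aemeasurable_fun_sum _ fun i _ => ?_
      have h2 : AEMeasurable (fun l => g l i) lm :=
        ((hg i).mono hBU).aemeasurable measurableSet_ball
      have h1 : AEMeasurable (fun x : (EuclideanSpace ℝ (Fin d)) × ((ℕ → Fin m) × (ℕ → Fin m)) =>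
          g x.1 i) (lm.prod (μ.prod μ)) := h2.comp_quasiMeasurePreserving hqmp
      have hS : MeasurableSet {x : (EuclideanSpace ℝ (Fin d)) × ((ℕ → Fin m) × (ℕ → Fin m)) |
          proj x k = i} := ((measurable_pi_apply k).comp hproj) (measurableSet_singleton i)
      exact h1.indicator hS
    have hFN : ∀ N : ℕ, AEMeasurable (fun x : (EuclideanSpace ℝ (Fin d)) × ((ℕ → Fin m) × (ℕ → Fin m)) =>
        -∑ k ∈ Finset.range N, b x.1 (proj x k) / ∏ j ∈ Finset.range (k+1), a x.1 (proj x j))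
        (lm.prod (μ.prod μ)) := by
      intro N
      refine AEMeasurable.neg ?_
      refine Finset.aemeasurable_fun_sum _ fun k _ => ?_
      exact (hcoef b hb k).div (Finset.aemeasurable_fun_prod _ fun j _ => hcoef a ha j)
    have hU_ae : ∀ᵐ x ∂(lm.prod (μ.prod μ)), x.1 ∈ U := by
      rw [MeasureTheory.ae_iff]
      have hsub0 : {x : (EuclideanSpace ℝ (Fin d)) × ((ℕ → Fin m) × (ℕ → Fin m)) | ¬ x.1 ∈ U}
          ⊆ (Uᶜ) ×ˢ (Set.univ : Set ((ℕ → Fin m) × (ℕ → Fin m))) := fun x hx => ⟨hx, trivial⟩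
      refine measure_mono_null hsub0 ?_
      rw [Measure.prod_prod]
      have h0 : lm Uᶜ = 0 := by
        rw [hlm, Measure.restrict_apply hUo.measurableSet.compl]
        have : Uᶜ ∩ Metric.ball l₀ δ = ∅ := by
          rw [Set.eq_empty_iff_forall_notMem]
          intro l hl
          exact hl.1 (hBU hl.2)
        rw [this, measure_empty]
      rw [h0, zero_mul]
    have htend : ∀ᵐ x ∂(lm.prod (μ.prod μ)), Filter.Tendsto (fun N =>
        -∑ k ∈ Finset.range N, b x.1 (proj x k) / ∏ j ∈ Finset.range (k+1), a x.1 (proj x j))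
        Filter.atTop (𝓝 (L37.cmSum (a x.1) (b x.1) (proj x))) := by
      filter_upwards [hU_ae] with x hx
      have h1 := L37.tendsto_affineIter hη hB (haη x.1 hx) (hbB x.1 hx) (proj x)
      have heq : (fun N => -∑ k ∈ Finset.range N,
          b x.1 (proj x k) / ∏ j ∈ Finset.range (k+1), a x.1 (proj x j))
          = affineIter (a x.1) (b x.1) (proj x) :=
        funext fun N => (L37.affineIter_eq hη (haη x.1 hx) (proj x) N).symm
      rw [heq]
      exact h1
    exact aemeasurable_of_tendsto_metrizable_ae Filter.atTop hFN htend
  have hcmAE1 := hABmeas (fun x => x.2.1) (measurable_fst.comp measurable_snd)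
  have hcmAE2 := hABmeas (fun x => x.2.2) (measurable_snd.comp measurable_snd)
  have hdistAE : AEMeasurable (fun x : (EuclideanSpace ℝ (Fin d)) × ((ℕ → Fin m) × (ℕ → Fin m)) =>
      dist (L37.cmSum (a x.1) (b x.1) x.2.1) (L37.cmSum (a x.1) (b x.1) x.2.2))
      (lm.prod (μ.prod μ)) :=
      continuous_dist.measurable.comp_aemeasurable (hcmAE1.prodMk hcmAE2)
  -- the indicator kernel
  set ind : ℝ → (EuclideanSpace ℝ (Fin d)) → ((ℕ → Fin m) × (ℕ → Fin m)) → ℝ≥0∞ := fun r l pq =>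
    Set.indicator (Set.Iic r) (fun _ => (1:ℝ≥0∞))
      (dist (L37.cmSum (a l) (b l) pq.1) (L37.cmSum (a l) (b l) pq.2)) with hind_def
  have hindAE : ∀ r : ℝ, AEMeasurable (Function.uncurry (ind r)) (lm.prod (μ.prod μ)) := by
    intro r
    have heq : Function.uncurry (ind r)
        = (Set.indicator (Set.Iic r) (fun _ => (1:ℝ≥0∞))) ∘
          (fun x : (EuclideanSpace ℝ (Fin d)) × ((ℕ → Fin m) × (ℕ → Fin m)) =>
            dist (L37.cmSum (a x.1) (b x.1) x.2.1) (L37.cmSum (a x.1) (b x.1) x.2.2)) := rfl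
    rw [heq]
    exact (measurable_const.indicator measurableSet_Iic).comp_aemeasurable hdistAE
  -- T λ r
  set T : EuclideanSpace ℝ (Fin d) → ℝ → ℝ≥0∞ := fun l r =>
    (μ.prod μ) {pq : (ℕ → Fin m) × (ℕ → Fin m) |
      dist (L37.cmSum (a l) (b l) pq.1) (L37.cmSum (a l) (b l) pq.2) ≤ r} with hT_def
  have hSmeas : ∀ l ∈ U, ∀ r : ℝ, MeasurableSet {pq : (ℕ → Fin m) × (ℕ → Fin m) |
      dist (L37.cmSum (a l) (b l) pq.1) (L37.cmSum (a l) (b l) pq.2) ≤ r} := by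
    intro l hl r
    have hcont : Continuous (L37.cmSum (a l) (b l)) :=
      L37.continuous_cmSum hη hB (haη l hl) (hbB l hl)
    exact (((hcont.comp continuous_fst).dist (hcont.comp continuous_snd)).measurable)
      measurableSet_Iic
  have hTeq : ∀ l ∈ U, ∀ r : ℝ, T l r = ∫⁻ pq, ind r l pq ∂(μ.prod μ) := by
    intro l hl r
    simp only [hT_def]
    rw [← lintegral_indicator_one (hSmeas l hl r)]
    refine lintegral_congr fun pq => ?_
    by_cases hpq : dist (L37.cmSum (a l) (b l) pq.1) (L37.cmSum (a l) (b l) pq.2) ≤ r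
    · simp [hind_def, Set.indicator_apply, hpq]
    · simp [hind_def, Set.indicator_apply, hpq]
  -- cylinder machinery
  set extn : (n : ℕ) → (Fin n → Fin m) → (ℕ → Fin m) :=
    fun n w k => if h : k < n then w ⟨k, h⟩ else 0 with hextn_def
  have hCylMeas : ∀ (n : ℕ) (cseq : ℕ → Fin m),
      MeasurableSet {ω : ℕ → Fin m | ∀ k < n, ω k = cseq k} := by
    intro n cseq
    have heq : {ω : ℕ → Fin m | ∀ k < n, ω k = cseq k}
        = ⋂ k ∈ {k : ℕ | k < n}, (fun ω : ℕ → Fin m => ω k) ⁻¹' {cseq k} := by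
      ext ω; simp [Set.mem_iInter]
    rw [heq]
    exact MeasurableSet.biInter (Set.to_countable _)
      fun k _ => (measurable_pi_apply k) (measurableSet_singleton _)
  have hμCyl : ∀ (n : ℕ) (w : Fin n → Fin m),
      μ {ω : ℕ → Fin m | ∀ k < n, ω k = extn n w k}
        = ENNReal.ofReal (∏ k ∈ Finset.range n, p (extn n w k)) :=
    fun n w => hμ n (extn n w)
  set Cn : ℕ → Set ((ℕ → Fin m) × (ℕ → Fin m)) := fun n =>
    {pq | ∀ k < n, pq.1 k = pq.2 k} with hCn_def
  set En : ℕ → Set ((ℕ → Fin m) × (ℕ → Fin m)) := fun n =>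
    {pq | (∀ k < n, pq.1 k = pq.2 k) ∧ pq.1 n ≠ pq.2 n} with hEn_def
  have hEq_meas : ∀ k : ℕ, MeasurableSet {pq : (ℕ → Fin m) × (ℕ → Fin m) | pq.1 k = pq.2 k} := by
    intro k
    have heq : {pq : (ℕ → Fin m) × (ℕ → Fin m) | pq.1 k = pq.2 k}
        = ⋃ i : Fin m, ((fun pq : (ℕ → Fin m) × (ℕ → Fin m) => pq.1 k) ⁻¹' {i}
            ∩ (fun pq : (ℕ → Fin m) × (ℕ → Fin m) => pq.2 k) ⁻¹' {i}) := by
      ext pq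
      constructor
      · intro h; exact Set.mem_iUnion.2 ⟨pq.2 k, h, rfl⟩
      · intro h
        obtain ⟨i, h1, h2⟩ := Set.mem_iUnion.1 h
        show pq.1 k = pq.2 k
        rw [show pq.1 k = i from h1, show pq.2 k = i from h2]
    rw [heq]
    refine MeasurableSet.iUnion fun i => MeasurableSet.inter ?_ ?_
    · exact ((measurable_pi_apply k).comp measurable_fst) (measurableSet_singleton i)
    · exact ((measurable_pi_apply k).comp measurable_snd) (measurableSet_singleton i)
  have hCnMeas : ∀ n : ℕ, MeasurableSet (Cn n) := by
    intro n
    have heq : Cn n = ⋂ k ∈ {k : ℕ | k < n},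
        {pq : (ℕ → Fin m) × (ℕ → Fin m) | pq.1 k = pq.2 k} := by
      ext pq; simp [hCn_def, Set.mem_iInter]
    rw [heq]
    exact MeasurableSet.biInter (Set.to_countable _) fun k _ => hEq_meas k
  have hEnMeas : ∀ n : ℕ, MeasurableSet (En n) := by
    intro n
    have heq : En n = Cn n ∩ ({pq : (ℕ → Fin m) × (ℕ → Fin m) | pq.1 n = pq.2 n})ᶜ := by
      ext pq; simp [hEn_def, hCn_def]
    rw [heq]
    exact (hCnMeas n).inter (hEq_meas n).compl
  have hEnDisj : Pairwise (Function.onFun Disjoint En) := by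
    have key : ∀ n n' : ℕ, n < n' → Disjoint (En n) (En n') := by
      intro n n' h
      rw [Set.disjoint_left]
      intro pq hpq hpq'
      exact hpq.2 (hpq'.1 n h)
    intro n n' hne
    rcases lt_or_gt_of_ne hne with h | h
    · exact key n n' h
    · exact (key n' n h).symm
  have hCn_decomp : ∀ n : ℕ, Cn n = ⋃ w : Fin n → Fin m,
      ({ω : ℕ → Fin m | ∀ k < n, ω k = extn n w k} ×ˢ
        {ω : ℕ → Fin m | ∀ k < n, ω k = extn n w k}) := by
    intro n
    ext pq
    constructor
    · intro hpq
      refine Set.mem_iUnion.2 ⟨fun k => pq.1 k.val, ?_, ?_⟩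
      · intro k hk
        simp only [hextn_def, dif_pos hk]
      · intro k hk
        have h1 := hpq k hk
        simp only [hextn_def, dif_pos hk]
        rw [← h1]
    · intro h
      obtain ⟨w, h1, h2⟩ := Set.mem_iUnion.1 h
      intro k hk
      rw [h1 k hk, h2 k hk]
  have hCylDisj : ∀ n : ℕ, Pairwise (Function.onFun Disjoint
      (fun w : Fin n → Fin m => ({ω : ℕ → Fin m | ∀ k < n, ω k = extn n w k} ×ˢ
        {ω : ℕ → Fin m | ∀ k < n, ω k = extn n w k}))) := by
    intro n w w' hne
    obtain ⟨i, hi⟩ := Function.ne_iff.1 hne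
    rw [Function.onFun, Set.disjoint_left]
    intro pq hpq hpq'
    apply hi
    have e1 : pq.1 i.val = extn n w i.val := hpq.1 i.val i.isLt
    have e2 : pq.1 i.val = extn n w' i.val := hpq'.1 i.val i.isLt
    have e3 : extn n w i.val = w i := by simp [hextn_def, i.isLt]
    have e4 : extn n w' i.val = w' i := by simp [hextn_def, i.isLt]
    rw [← e3, ← e1, e2, e4]
  have hCn_val : ∀ (n : ℕ) (t : Fin m → ℝ≥0∞),
      ∫⁻ pq in Cn n, ∏ k ∈ Finset.range n, t (pq.1 k) ∂(μ.prod μ)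
        = (∑ i, t i * (ENNReal.ofReal (p i))^2) ^ n := by
    intro n t
    rw [hCn_decomp n, lintegral_iUnion
      (fun w => ((hCylMeas n (extn n w)).prod (hCylMeas n (extn n w)))) (hCylDisj n)]
    rw [tsum_fintype]
    have hval : ∀ w : Fin n → Fin m,
        ∫⁻ pq in ({ω : ℕ → Fin m | ∀ k < n, ω k = extn n w k} ×ˢ
          {ω : ℕ → Fin m | ∀ k < n, ω k = extn n w k}),
          ∏ k ∈ Finset.range n, t (pq.1 k) ∂(μ.prod μ)
        = ∏ i : Fin n, (t (w i) * (ENNReal.ofReal (p (w i)))^2) := by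
      intro w
      have hconst : ∀ pq ∈ ({ω : ℕ → Fin m | ∀ k < n, ω k = extn n w k} ×ˢ
          {ω : ℕ → Fin m | ∀ k < n, ω k = extn n w k}),
          (fun pq : (ℕ → Fin m) × (ℕ → Fin m) => ∏ k ∈ Finset.range n, t (pq.1 k)) pq
            = (fun _ => ∏ k ∈ Finset.range n, t (extn n w k)) pq := by
        intro pq hpq
        refine Finset.prod_congr rfl fun k hk => ?_
        rw [hpq.1 k (Finset.mem_range.1 hk)]
      rw [setLIntegral_congr_fun
        (((hCylMeas n (extn n w)).prod (hCylMeas n (extn n w)))) hconst]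
      rw [setLIntegral_const, Measure.prod_prod, hμCyl n w, ← sq]
      rw [ENNReal.ofReal_prod_of_nonneg (fun k _ => (hp_pos _).le)]
      rw [← Finset.prod_pow, ← Finset.prod_mul_distrib]
      rw [← Fin.prod_univ_eq_prod_range
        (fun k => t (extn n w k) * (ENNReal.ofReal (p (extn n w k)))^2) n]
      refine Finset.prod_congr rfl fun i _ => ?_
      have he : extn n w i.val = w i := by simp [hextn_def, i.isLt]
      rw [he]
    simp_rw [hval]
    exact L37.sum_prod_pow (fun i => t i * (ENNReal.ofReal (p i))^2) n
  have hdiag : (μ.prod μ) {pq : (ℕ → Fin m) × (ℕ → Fin m) | ∀ k, pq.1 k = pq.2 k} = 0 := by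
    set β : ℝ≥0∞ := ∑ i, (ENNReal.ofReal (p i))^2 with hβ_def
    have hCnvol : ∀ n, (μ.prod μ) (Cn n) = β ^ n := by
      intro n
      have h := hCn_val n (fun _ => 1)
      simpa using h
    have hβlt : β < 1 := by
      have hγ : ∑ i, p i ^ 2 < 1 := by
        calc ∑ i, p i ^ 2 < ∑ i, p i :=
              Finset.sum_lt_sum_of_nonempty Finset.univ_nonempty
                (fun i _ => by nlinarith [hp_pos i, hplt1 i])
          _ = 1 := hsum1
      have hβeq : β = ENNReal.ofReal (∑ i, p i ^ 2) := by
        rw [hβ_def, ENNReal.ofReal_sum_of_nonneg (fun i _ => by positivity)]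
        refine Finset.sum_congr rfl fun i _ => ?_
        rw [← ENNReal.ofReal_pow (hp_pos i).le]
      rw [hβeq]
      exact ENNReal.ofReal_lt_one.2 hγ
    have hsub : ∀ n, {pq : (ℕ → Fin m) × (ℕ → Fin m) | ∀ k, pq.1 k = pq.2 k} ⊆ Cn n :=
      fun n pq hpq k _ => hpq k
    have hle : ∀ n, (μ.prod μ) {pq : (ℕ → Fin m) × (ℕ → Fin m) | ∀ k, pq.1 k = pq.2 k} ≤ β ^ n :=
      fun n => (measure_mono (hsub n)).trans_eq (hCnvol n)
    have htendβ : Filter.Tendsto (fun n => β ^ n) Filter.atTop (𝓝 0) :=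
      ENNReal.tendsto_pow_atTop_nhds_zero_of_lt_one hβlt
    exact le_antisymm (ge_of_tendsto' htendβ hle) zero_le
  have hdiag_sub : (⋃ n, En n)ᶜ ⊆
      {pq : (ℕ → Fin m) × (ℕ → Fin m) | ∀ k, pq.1 k = pq.2 k} := by
    intro pq hpq
    intro k
    induction k using Nat.strong_induction_on with
    | _ k ih =>
      by_contra hne2
      exact hpq (Set.mem_iUnion.2 ⟨k, ⟨fun j hj => ih j hj, hne2⟩⟩)
  have hg_bound : ∀ r : ℝ, 0 < r → r ≤ D → ∀ n : ℕ, ∀ pq ∈ En n,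
      (∫⁻ l, ind r l pq ∂lm) ≤ (ENNReal.ofReal C₁ * ENNReal.ofReal (r^2)) *
        ∏ k ∈ Finset.range n, ENNReal.ofReal ((ca (pq.1 k) + ε)^2) := by
    intro r hr hrD n pq hpq
    obtain ⟨hag, hne⟩ := hpq
    set Aw : ℝ := ∏ k ∈ Finset.range n, (ca (pq.1 k) + ε) with hAw_def
    have hAwpos : 0 < Aw := Finset.prod_pos fun k _ => by
      have := hca1 (pq.1 k); linarith
    set r' : ℝ := min (r * Aw) D with hr'_def
    have hr'pos : 0 < r' := lt_min (by positivity) hDpos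
    have hr'D : r' ≤ D := min_le_right _ _
    have hstep1 : (∫⁻ l, ind r l pq ∂lm) ≤
        lm {l | dist (L37.cmSum (a l) (b l) pq.1) (L37.cmSum (a l) (b l) pq.2) ≤ r} := by
      have heq : (fun l => ind r l pq)
          = Set.indicator {l | dist (L37.cmSum (a l) (b l) pq.1)
              (L37.cmSum (a l) (b l) pq.2) ≤ r} (fun _ => (1:ℝ≥0∞)) := by
        funext l
        simp only [hind_def]
        simp only [Set.indicator_apply, Set.mem_Iic, Set.mem_setOf_eq]
      rw [heq]
      exact lintegral_indicator_one_le _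
    have hsub : {l | dist (L37.cmSum (a l) (b l) pq.1) (L37.cmSum (a l) (b l) pq.2) ≤ r}
        ∩ Metric.ball l₀ δ
        ⊆ {l ∈ U | ‖codingMap (a l) (b l) (L37.shf n pq.1)
            - codingMap (a l) (b l) (L37.shf n pq.2)‖ ≤ r'} := by
      rintro l ⟨hlr, hlb⟩
      have hlU : l ∈ U := hBU hlb
      have hceq : codingMap (a l) (b l) = L37.cmSum (a l) (b l) :=
        L37.codingMap_eq hη hB (haη l hlU) (hbB l hlU)
      refine ⟨hlU, ?_⟩
      rw [hceq]
      have hrel := L37.abs_cmSum_sub hη hB (haη l hlU) (hbB l hlU) n pq.1 pq.2 hag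
      have h1 : ‖L37.cmSum (a l) (b l) pq.1 - L37.cmSum (a l) (b l) pq.2‖ ≤ r := by
        rw [← dist_eq_norm]; exact hlr
      have h2 : ∏ k ∈ Finset.range n, ‖a l (pq.1 k)‖ ≤ Aw := by
        refine Finset.prod_le_prod (fun k _ => norm_nonneg _) fun k _ => ?_
        exact hBa l hlb (pq.1 k)
      have hD2 : ‖L37.cmSum (a l) (b l) pq.1 - L37.cmSum (a l) (b l) pq.2‖
          * ∏ k ∈ Finset.range n, ‖a l (pq.1 k)‖ ≤ r * Aw := by
        refine mul_le_mul h1 h2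
          (Finset.prod_nonneg fun k _ => norm_nonneg _) hr.le
      have hD3 : ‖L37.cmSum (a l) (b l) (L37.shf n pq.1)
          - L37.cmSum (a l) (b l) (L37.shf n pq.2)‖ ≤ D := by
        rw [hD_def]
        exact L37.dist_cmSum_le hη hB (haη l hlU) (hbB l hlU) _ _
      rw [hrel] at hD2
      exact le_min hD2 hD3
    have hne' : L37.shf n pq.1 0 ≠ L37.shf n pq.2 0 := by
      simpa [L37.shf] using hne
    have hTCapp := hTC' r' ⟨hr'pos, hr'D⟩ (L37.shf n pq.1) (L37.shf n pq.2) hne'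
    calc (∫⁻ l, ind r l pq ∂lm)
        ≤ lm {l | dist (L37.cmSum (a l) (b l) pq.1) (L37.cmSum (a l) (b l) pq.2) ≤ r} := hstep1
      _ = volume ({l | dist (L37.cmSum (a l) (b l) pq.1)
            (L37.cmSum (a l) (b l) pq.2) ≤ r} ∩ Metric.ball l₀ δ) := by
          rw [hlm, Measure.restrict_apply' measurableSet_ball]
      _ ≤ volume {l ∈ U | ‖codingMap (a l) (b l) (L37.shf n pq.1)
            - codingMap (a l) (b l) (L37.shf n pq.2)‖ ≤ r'} := measure_mono hsub
      _ ≤ ENNReal.ofReal (C₁ * r' ^ 2) := hTCapp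
      _ ≤ ENNReal.ofReal (C₁ * (r * Aw) ^ 2) := by
          apply ENNReal.ofReal_le_ofReal
          have hle2 : r' ≤ r * Aw := min_le_left _ _
          have h2 : r' ^ 2 ≤ (r * Aw) ^ 2 := pow_le_pow_left₀ hr'pos.le hle2 2
          nlinarith
      _ = (ENNReal.ofReal C₁ * ENNReal.ofReal (r^2)) *
            ∏ k ∈ Finset.range n, ENNReal.ofReal ((ca (pq.1 k) + ε)^2) := by
          have hAw2 : ENNReal.ofReal (Aw^2)
              = ∏ k ∈ Finset.range n, ENNReal.ofReal ((ca (pq.1 k) + ε)^2) := by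
            rw [hAw_def, ← Finset.prod_pow]
            exact ENNReal.ofReal_prod_of_nonneg (fun k _ => by positivity)
          rw [mul_pow, show C₁ * (r^2 * Aw^2) = C₁ * r^2 * Aw^2 from by ring,
            ENNReal.ofReal_mul (by positivity), ENNReal.ofReal_mul hC₁pos.le, hAw2, mul_assoc]
  have hθeq : ∑ i, ENNReal.ofReal ((ca i + ε)^2) * (ENNReal.ofReal (p i))^2
      = ENNReal.ofReal θ := by
    rw [hθ_def, ENNReal.ofReal_sum_of_nonneg (fun i _ => by positivity)]
    refine Finset.sum_congr rfl fun i _ => ?_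
    rw [ENNReal.ofReal_mul (by positivity), ENNReal.ofReal_pow (hp_pos i).le]
    ring
  have hmain : ∀ r : ℝ, 0 < r → r ≤ D →
      ∫⁻ l, T l r ∂lm ≤ (ENNReal.ofReal C₁ * ENNReal.ofReal (r^2)) *
        (1 - ENNReal.ofReal θ)⁻¹ := by
    intro r hr hrD
    have step1 : ∫⁻ l, T l r ∂lm = ∫⁻ l, ∫⁻ pq, ind r l pq ∂(μ.prod μ) ∂lm := by
      apply lintegral_congr_ae
      filter_upwards [ae_restrict_mem measurableSet_ball] with l hl
      exact hTeq l (hBU hl) r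
    have step2 : ∫⁻ l, ∫⁻ pq, ind r l pq ∂(μ.prod μ) ∂lm
        = ∫⁻ pq, ∫⁻ l, ind r l pq ∂lm ∂(μ.prod μ) :=
      lintegral_lintegral_swap (hindAE r)
    have step3 : ∫⁻ pq, (∫⁻ l, ind r l pq ∂lm) ∂(μ.prod μ)
        = ∑' n : ℕ, ∫⁻ pq in En n, (∫⁻ l, ind r l pq ∂lm) ∂(μ.prod μ) := by
      have hcompl : (μ.prod μ) (⋃ n, En n)ᶜ = 0 :=
        measure_mono_null hdiag_sub hdiag
      rw [← lintegral_add_compl (fun pq => ∫⁻ l, ind r l pq ∂lm)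
        (MeasurableSet.iUnion hEnMeas)]
      rw [setLIntegral_measure_zero _ _ hcompl, add_zero]
      rw [lintegral_iUnion hEnMeas hEnDisj]
    have step4 : ∀ n : ℕ, ∫⁻ pq in En n, (∫⁻ l, ind r l pq ∂lm) ∂(μ.prod μ)
        ≤ (ENNReal.ofReal C₁ * ENNReal.ofReal (r^2)) * (ENNReal.ofReal θ) ^ n := by
      intro n
      have hEnCn : En n ⊆ Cn n := fun pq hpq => hpq.1
      have hGm : Measurable (fun pq : (ℕ → Fin m) × (ℕ → Fin m) =>
          (ENNReal.ofReal C₁ * ENNReal.ofReal (r^2)) *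
            ∏ k ∈ Finset.range n, ENNReal.ofReal ((ca (pq.1 k) + ε)^2)) := by
        refine Measurable.const_mul ?_ _
        refine Finset.measurable_prod _ fun k _ => ?_
        have hmf : Measurable (fun i : Fin m => ENNReal.ofReal ((ca i + ε)^2)) :=
          measurable_from_top
        exact hmf.comp ((measurable_pi_apply k).comp measurable_fst)
      calc ∫⁻ pq in En n, (∫⁻ l, ind r l pq ∂lm) ∂(μ.prod μ)
          ≤ ∫⁻ pq in En n, ((ENNReal.ofReal C₁ * ENNReal.ofReal (r^2)) *
              ∏ k ∈ Finset.range n, ENNReal.ofReal ((ca (pq.1 k) + ε)^2)) ∂(μ.prod μ) :=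
            setLIntegral_mono hGm (hg_bound r hr hrD n)
        _ ≤ ∫⁻ pq in Cn n, ((ENNReal.ofReal C₁ * ENNReal.ofReal (r^2)) *
              ∏ k ∈ Finset.range n, ENNReal.ofReal ((ca (pq.1 k) + ε)^2)) ∂(μ.prod μ) :=
            lintegral_mono_set hEnCn
        _ = (ENNReal.ofReal C₁ * ENNReal.ofReal (r^2)) *
              ∫⁻ pq in Cn n, (∏ k ∈ Finset.range n,
                ENNReal.ofReal ((ca (pq.1 k) + ε)^2)) ∂(μ.prod μ) :=
            lintegral_const_mul' _ _
              (ENNReal.mul_ne_top ENNReal.ofReal_ne_top ENNReal.ofReal_ne_top)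
        _ = (ENNReal.ofReal C₁ * ENNReal.ofReal (r^2)) * (ENNReal.ofReal θ) ^ n := by
            rw [hCn_val n (fun i => ENNReal.ofReal ((ca i + ε)^2)), hθeq]
    calc ∫⁻ l, T l r ∂lm
        = ∑' n : ℕ, ∫⁻ pq in En n, (∫⁻ l, ind r l pq ∂lm) ∂(μ.prod μ) := by
          rw [step1, step2, step3]
      _ ≤ ∑' n : ℕ, (ENNReal.ofReal C₁ * ENNReal.ofReal (r^2)) * (ENNReal.ofReal θ) ^ n :=
          ENNReal.tsum_le_tsum step4
      _ = (ENNReal.ofReal C₁ * ENNReal.ofReal (r^2)) * (1 - ENNReal.ofReal θ)⁻¹ := by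
          rw [ENNReal.tsum_mul_left, ENNReal.tsum_geometric]
  set K : ℝ≥0∞ := ENNReal.ofReal C₁ * (1 - ENNReal.ofReal θ)⁻¹ with hK_def
  have hKtop : K ≠ ⊤ := by
    refine ENNReal.mul_ne_top ENNReal.ofReal_ne_top (ENNReal.inv_ne_top.2 ?_)
    intro h
    have h2 := tsub_eq_zero_iff_le.1 h
    exact absurd (lt_of_lt_of_le (ENNReal.ofReal_lt_one.2 hθlt) h2) (lt_irrefl _)
  set u : ℕ → ℝ := fun n => D / 2 ^ n with hu_def
  have hu_pos : ∀ n, 0 < u n := fun n => by positivity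
  have hu_le : ∀ n, u n ≤ D := by
    intro n
    simp only [hu_def]
    exact div_le_self hDpos.le (one_le_pow₀ (by norm_num))
  have hq0 : ∀ n, ENNReal.ofReal ((u n)^2) ≠ 0 :=
    fun n => (ENNReal.ofReal_pos.2 (by positivity)).ne'
  have hmain' : ∀ n : ℕ,
      ∫⁻ l, T l (u n) * (ENNReal.ofReal ((u n)^2))⁻¹ ∂lm ≤ K := by
    intro n
    rw [lintegral_mul_const' _ _ (ENNReal.inv_ne_top.2 (hq0 n))]
    calc (∫⁻ l, T l (u n) ∂lm) * (ENNReal.ofReal ((u n)^2))⁻¹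
        ≤ ((ENNReal.ofReal C₁ * ENNReal.ofReal ((u n)^2)) * (1 - ENNReal.ofReal θ)⁻¹) *
            (ENNReal.ofReal ((u n)^2))⁻¹ :=
          mul_le_mul_left (hmain (u n) (hu_pos n) (hu_le n)) _
      _ = K * (ENNReal.ofReal ((u n)^2) * (ENNReal.ofReal ((u n)^2))⁻¹) := by
          rw [hK_def]; ring
      _ = K := by
          rw [ENNReal.mul_inv_cancel (hq0 n) ENNReal.ofReal_ne_top, mul_one]
  have hTae_meas : ∀ n : ℕ, AEMeasurable (fun l => T l (u n)) lm := by
    intro n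
    have h1 : AEMeasurable (fun l => ∫⁻ pq, ind (u n) l pq ∂(μ.prod μ)) lm :=
      L37.aemeasurable_lintegral_right (hindAE (u n))
    refine h1.congr ?_
    filter_upwards [ae_restrict_mem measurableSet_ball] with l hl
    exact (hTeq l (hBU hl) (u n)).symm
  have hFatou : ∫⁻ l, Filter.liminf
      (fun n => T l (u n) * (ENNReal.ofReal ((u n)^2))⁻¹) Filter.atTop ∂lm ≤ K := by
    calc ∫⁻ l, Filter.liminf (fun n => T l (u n) * (ENNReal.ofReal ((u n)^2))⁻¹)
          Filter.atTop ∂lm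
        ≤ Filter.liminf (fun n => ∫⁻ l, T l (u n) * (ENNReal.ofReal ((u n)^2))⁻¹ ∂lm)
            Filter.atTop :=
          lintegral_liminf_le' fun n => (hTae_meas n).mul_const _
      _ ≤ K := by
          refine Filter.liminf_le_of_le (by isBoundedDefault) ?_
          intro b hb
          obtain ⟨n, hn⟩ := hb.exists
          exact hn.trans (hmain' n)
  have hae_fin : ∀ᵐ l ∂lm, Filter.liminf
      (fun n => T l (u n) * (ENNReal.ofReal ((u n)^2))⁻¹) Filter.atTop < ⊤ := by
    refine ae_lt_top' (L37.aemeasurable_liminf' fun n => (hTae_meas n).mul_const _) ?_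
    exact (hFatou.trans_lt (lt_top_iff_ne_top.2 hKtop)).ne
  refine ⟨δ, hδpos, hBU, ?_⟩
  rw [← hlm]
  filter_upwards [hae_fin, ae_restrict_mem measurableSet_ball] with l hLfin hl
  have hlU : l ∈ U := hBU hl
  have hcmeq : codingMap (a l) (b l) = L37.cmSum (a l) (b l) :=
    L37.codingMap_eq hη hB (haη l hlU) (hbB l hlU)
  have hcont : Continuous (L37.cmSum (a l) (b l)) :=
    L37.continuous_cmSum hη hB (haη l hlU) (hbB l hlU)
  have hmeascm : Measurable (L37.cmSum (a l) (b l)) := hcont.measurable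
  set ν : Measure ℂ := μ.map (L37.cmSum (a l) (b l)) with hν_def
  haveI : IsProbabilityMeasure ν := Measure.isProbabilityMeasure_map hmeascm.aemeasurable
  have hTν : ∀ r : ℝ, T l r = ∫⁻ z, ν (Metric.closedBall z r) ∂ν := by
    intro r
    simp only [hT_def]
    rw [Measure.prod_apply (hSmeas l hlU r)]
    have hpre : ∀ ω : ℕ → Fin m,
        μ (Prod.mk ω ⁻¹' {pq : (ℕ → Fin m) × (ℕ → Fin m) |
          dist (L37.cmSum (a l) (b l) pq.1) (L37.cmSum (a l) (b l) pq.2) ≤ r})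
        = ν (Metric.closedBall (L37.cmSum (a l) (b l) ω) r) := by
      intro ω
      rw [hν_def, Measure.map_apply hmeascm measurableSet_closedBall]
      congr 1
      ext τ
      simp [Metric.mem_closedBall, dist_comm]
    simp_rw [hpre]
    rw [hν_def]
    rw [lintegral_map (L37.measurable_measure_closedBall ν r) hmeascm]
  have hfinν : Filter.liminf (fun n : ℕ =>
      (∫⁻ z, ν (Metric.closedBall z (D / 2 ^ n)) ∂ν) *
        (ENNReal.ofReal ((D / 2 ^ n) ^ 2))⁻¹) Filter.atTop < ⊤ := by
    have heq : (fun n : ℕ => (∫⁻ z, ν (Metric.closedBall z (D / 2 ^ n)) ∂ν) *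
        (ENNReal.ofReal ((D / 2 ^ n) ^ 2))⁻¹)
        = fun n => T l (u n) * (ENNReal.ofReal ((u n)^2))⁻¹ := by
      funext n
      simp only [hu_def]
      rw [← hTν (D / 2 ^ n)]
    rw [heq]
    exact hLfin
  obtain ⟨hac, hmem⟩ := L37.absCont_and_L2 ν hDpos hfinν
  have hmapeq : μ.map (codingMap (a l) (b l)) = ν := by rw [hcmeq, hν_def]
  refine ⟨?_, ?_, ?_⟩
  · rw [hmapeq]; exact hac
  · rw [hmapeq]; exact hmem
  · have hJ : limitSet (a l) (b l) = Set.range (L37.cmSum (a l) (b l)) := by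
      rw [limitSet, hcmeq]
    rw [hJ]
    by_contra hcon
    have h0 : volume (Set.range (L37.cmSum (a l) (b l))) = 0 :=
      le_antisymm (not_lt.1 hcon) zero_le
    have hν0 : ν (Set.range (L37.cmSum (a l) (b l))) = 0 := hac h0
    have hν1 : ν (Set.range (L37.cmSum (a l) (b l))) = 1 := by
      have hcompact : IsCompact (Set.range (L37.cmSum (a l) (b l))) :=
        isCompact_range hcont
      rw [hν_def, Measure.map_apply hmeascm hcompact.isClosed.measurableSet]
      rw [Set.preimage_range]
      exact hμuniv
    rw [hν1] at hν0
    exact one_ne_zero hν0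
end

section
/- Lemma 3.15 (abstract form of the strong transversality integral estimate): Let d ∈ ℕ, let U ⊆ ℝ^d be a bounded open set, let D > 0, and let F : U → [0, D] be a Borel measurable function. Suppose there is C₁′ > 0 such that for every r ∈ (0, D) the set {λ ∈ U : F(λ) ≤ r} can be covered by at most C₁′ r^{2−d} balls of radius r. Let u ≥ 0 with u − d + 2 > 0, let ν be a Frostman measure on U with exponent u and constant c, and let α ∈ (0, u − d + 2). Then ∫_U F(λ)^{−α} dν(λ) ≤ (α c C₁′/(u − d + 2 − α)) D^{u−d+2−α} + D^{−α}. -/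
open MeasureTheory Filter Set Metric ENNReal

/-- **Lemma 3.15** (abstract form of the strong transversality integral estimate).
Let `F : U → [0,D]` be Borel measurable on a bounded open `U ⊆ ℝ^d`, and suppose each
sublevel set `{λ ∈ U : F(λ) ≤ r}` (`0 < r < D`) can be covered by at most `C₁' r^(2-d)`
balls of radius `r`. If `ν` is a Frostman measure on `U` with exponent `u`
(`ν(B(x,r)) ≤ c r^u`), `u - d + 2 > 0` and `α ∈ (0, u - d + 2)`, then
`∫_U F(λ)^(-α) dν(λ) ≤ (α c C₁'/(u-d+2-α)) D^(u-d+2-α) + D^(-α)`. -/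
theorem stmt7 {d : ℕ} (U : Set (EuclideanSpace ℝ (Fin d)))
    (hUo : IsOpen U) (hUbd : Bornology.IsBounded U)
    (D : ℝ) (hD : 0 < D)
    (F : EuclideanSpace ℝ (Fin d) → ℝ) (hFmeas : Measurable F)
    (hFrange : ∀ l ∈ U, F l ∈ Set.Icc 0 D)
    (C₁' : ℝ) (hC₁' : 0 < C₁')
    (hSTC : ∀ r ∈ Set.Ioo (0:ℝ) D,
      ∃ S : Finset (EuclideanSpace ℝ (Fin d)),
        (S.card : ℝ) ≤ C₁' * r ^ ((2:ℝ) - d) ∧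
        {l ∈ U | F l ≤ r} ⊆ ⋃ x ∈ S, Metric.closedBall x r)
    (u : ℝ) (hu : 0 ≤ u) (hud : 0 < u - d + 2)
    (ν : Measure (EuclideanSpace ℝ (Fin d))) [IsProbabilityMeasure ν]
    (hνU : ν U = 1) (c : ℝ) (hc : 0 < c)
    (hFrost : ∀ (x : EuclideanSpace ℝ (Fin d)) (r : ℝ), 0 < r →
      ν (Metric.ball x r) ≤ ENNReal.ofReal (c * r ^ u))
    (α : ℝ) (hα : α ∈ Set.Ioo (0:ℝ) (u - d + 2)) :
    ∫⁻ l in U, (ENNReal.ofReal (F l)) ^ (-α) ∂ν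
      ≤ ENNReal.ofReal (α * c * C₁' / (u - d + 2 - α) * D ^ (u - d + 2 - α))
        + ENNReal.ofReal (D ^ (-α)) := by
  obtain ⟨hα0, hαu⟩ := hα
  set β : ℝ := (u - d + 2) / α with hβdef
  have hαβ : α * β = u - d + 2 := mul_div_cancel₀ _ hα0.ne'
  have hβ1 : 1 < β := (one_lt_div hα0).2 (by linarith)
  set T : ℝ := D ^ (-α) with hTdef
  have hT : 0 < T := Real.rpow_pos_of_pos hD _
  -- the key sublevel-set measure estimate
  have key : ∀ r ∈ Set.Ioo (0:ℝ) D,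
      ν {l ∈ U | F l ≤ r} ≤ ENNReal.ofReal (c * C₁' * r ^ (u - d + 2)) := by
    intro r hr
    obtain ⟨S, hScard, hScover⟩ := hSTC r hr
    have hball : ∀ x, ν (Metric.closedBall x r) ≤ ENNReal.ofReal (c * r ^ u) := by
      intro x
      have cont : Tendsto (fun s : ℝ => ENNReal.ofReal (c * s ^ u)) (nhdsWithin r (Set.Ioi r))
          (nhds (ENNReal.ofReal (c * r ^ u))) := by
        apply Tendsto.mono_left _ nhdsWithin_le_nhds
        exact (ENNReal.continuous_ofReal.tendsto _).comp
          ((continuousAt_const.mul (Real.continuousAt_rpow_const r u (Or.inl hr.1.ne'))))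
      refine ge_of_tendsto cont ?_
      filter_upwards [self_mem_nhdsWithin] with s hs
      exact le_trans (measure_mono (Metric.closedBall_subset_ball hs))
        (hFrost x s (hr.1.trans hs))
    have hcast : (S.card : ℝ≥0∞) ≤ ENNReal.ofReal (C₁' * r ^ ((2:ℝ) - d)) := by
      rw [← ENNReal.ofReal_natCast]
      exact ENNReal.ofReal_le_ofReal hScard
    calc ν {l ∈ U | F l ≤ r} ≤ ν (⋃ x ∈ S, Metric.closedBall x r) := measure_mono hScover
      _ ≤ ∑ x ∈ S, ν (Metric.closedBall x r) := measure_biUnion_finset_le _ _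
      _ ≤ ∑ _x ∈ S, ENNReal.ofReal (c * r ^ u) := Finset.sum_le_sum fun x _ => hball x
      _ = (S.card : ℝ≥0∞) * ENNReal.ofReal (c * r ^ u) := by
          rw [Finset.sum_const, nsmul_eq_mul]
      _ ≤ ENNReal.ofReal (C₁' * r ^ ((2:ℝ) - d)) * ENNReal.ofReal (c * r ^ u) := by
          exact mul_le_mul_left hcast _
      _ = ENNReal.ofReal (c * C₁' * r ^ (u - d + 2)) := by
          rw [← ENNReal.ofReal_mul (mul_nonneg hC₁'.le (Real.rpow_nonneg hr.1.le _))]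
          congr 1
          rw [show C₁' * r ^ ((2:ℝ) - d) * (c * r ^ u) = c * C₁' * (r ^ ((2:ℝ) - d) * r ^ u) by
            ring, ← Real.rpow_add hr.1]
          congr 1
          ring
  have hUm : MeasurableSet U := hUo.measurableSet
  -- the zero set of F has ν-measure zero inside U
  have hF0 : ν {l ∈ U | F l = 0} = 0 := by
    have hb : ∀ r ∈ Set.Ioo (0:ℝ) D,
        ν {l ∈ U | F l = 0} ≤ ENNReal.ofReal (c * C₁' * r ^ (u - d + 2)) := by
      intro r hr
      refine le_trans (measure_mono ?_) (key r hr)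
      rintro l ⟨hl, hl0⟩
      exact ⟨hl, by rw [hl0]; exact hr.1.le⟩
    have cont : Tendsto (fun r : ℝ => ENNReal.ofReal (c * C₁' * r ^ (u - d + 2)))
        (nhdsWithin 0 (Set.Ioi 0)) (nhds 0) := by
      have h1 : Tendsto (fun r : ℝ => c * C₁' * r ^ (u - d + 2)) (nhds 0)
          (nhds (c * C₁' * (0:ℝ) ^ (u - d + 2))) :=
        continuousAt_const.mul (Real.continuousAt_rpow_const 0 _ (Or.inr hud.le))
      rw [Real.zero_rpow hud.ne', mul_zero] at h1
      have h2 : Tendsto (fun r : ℝ => ENNReal.ofReal (c * C₁' * r ^ (u - d + 2)))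
          (nhds 0) (nhds (ENNReal.ofReal 0)) := (ENNReal.continuous_ofReal.tendsto 0).comp h1
      rw [ENNReal.ofReal_zero] at h2
      exact h2.mono_left nhdsWithin_le_nhds
    have hle : ν {l ∈ U | F l = 0} ≤ 0 := by
      refine ge_of_tendsto cont ?_
      filter_upwards [Ioo_mem_nhdsGT_of_mem (Set.left_mem_Ico.2 hD)] with r hr
      exact hb r hr
    exact le_antisymm hle zero_le
  -- rewrite the integrand a.e.
  have hcongr : ∫⁻ l in U, (ENNReal.ofReal (F l)) ^ (-α) ∂ν
      = ∫⁻ l in U, ENNReal.ofReal (F l ^ (-α)) ∂ν := by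
    apply lintegral_congr_ae
    have h0 : ∀ᵐ l ∂ν, ¬ (l ∈ U ∧ F l = 0) := by
      rw [ae_iff]
      simpa [Set.setOf_and] using hF0
    refine (ae_restrict_iff' hUm).2 ?_
    filter_upwards [h0] with l hl hlU
    have hFl : 0 < F l := by
      rcases lt_or_eq_of_le (hFrange l hlU).1 with h | h
      · exact h
      · exact absurd ⟨hlU, h.symm⟩ hl
    rw [← ENNReal.ofReal_rpow_of_pos hFl]
  rw [hcongr]
  -- layer cake
  have hfm : Measurable fun l => F l ^ (-α) := by fun_prop
  rw [lintegral_eq_lintegral_meas_lt (ν.restrict U)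
    ((ae_restrict_iff' hUm).2 (Eventually.of_forall fun l hl => Real.rpow_nonneg (hFrange l hl).1 _))
    hfm.aemeasurable]
  -- split the t-integral at T
  rw [← Set.Ioc_union_Ioi_eq_Ioi hT.le,
    lintegral_union measurableSet_Ioi Set.Ioc_disjoint_Ioi_same]
  have hrestr1 : ν.restrict U Set.univ = 1 := by
    rw [Measure.restrict_apply MeasurableSet.univ, Set.univ_inter, hνU]
  have part1 : ∫⁻ t in Set.Ioc (0:ℝ) T, (ν.restrict U) {a | t < F a ^ (-α)}
      ≤ ENNReal.ofReal (D ^ (-α)) := by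
    calc ∫⁻ t in Set.Ioc (0:ℝ) T, (ν.restrict U) {a | t < F a ^ (-α)}
        ≤ ∫⁻ _t in Set.Ioc (0:ℝ) T, 1 := by
          refine lintegral_mono fun t => ?_
          rw [← hrestr1]
          exact measure_mono (Set.subset_univ _)
      _ = ENNReal.ofReal (D ^ (-α)) := by
          rw [lintegral_const, Measure.restrict_apply MeasurableSet.univ, Set.univ_inter,
            Real.volume_Ioc, one_mul, sub_zero]
  have part2 : ∫⁻ t in Set.Ioi T, (ν.restrict U) {a | t < F a ^ (-α)}
      ≤ ENNReal.ofReal (α * c * C₁' / (u - d + 2 - α) * D ^ (u - d + 2 - α)) := by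
    have hbound : ∀ t ∈ Set.Ioi T, (ν.restrict U) {a | t < F a ^ (-α)}
        ≤ ENNReal.ofReal (c * C₁' * t ^ (-β)) := by
      intro t ht
      have ht0 : 0 < t := hT.trans ht
      set r : ℝ := t ^ (-α⁻¹) with hrdef
      have hr0 : 0 < r := Real.rpow_pos_of_pos ht0 _
      have hrD : r < D := by
        have h1 : t ^ (-α⁻¹) < T ^ (-α⁻¹) :=
          Real.rpow_lt_rpow_of_neg hT ht (neg_lt_zero.2 (inv_pos.2 hα0))
        have h2 : T ^ (-α⁻¹) = D := by
          rw [hTdef, ← Real.rpow_mul hD.le,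
            show (-α) * (-α⁻¹) = α * α⁻¹ by ring, mul_inv_cancel₀ hα0.ne', Real.rpow_one]
        rw [h2] at h1
        exact h1
      have hsub : {a | t < F a ^ (-α)} ∩ U ⊆ {l ∈ U | F l ≤ r} := by
        rintro a ⟨hat, haU⟩
        have hFa0 : 0 ≤ F a := (hFrange a haU).1
        rcases eq_or_lt_of_le hFa0 with h | h
        · exfalso
          rw [Set.mem_setOf_eq, ← h, Real.zero_rpow (by simpa using hα0.ne')] at hat
          exact absurd hat (not_lt.2 ht0.le)
        · refine ⟨haU, ?_⟩
          have h1 : ((F a) ^ (-α)) ^ (-α⁻¹) < t ^ (-α⁻¹) :=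
            Real.rpow_lt_rpow_of_neg ht0 hat (neg_lt_zero.2 (inv_pos.2 hα0))
          rw [← Real.rpow_mul h.le, show (-α) * (-α⁻¹) = α * α⁻¹ by ring,
            mul_inv_cancel₀ hα0.ne', Real.rpow_one] at h1
          exact h1.le
      calc (ν.restrict U) {a | t < F a ^ (-α)}
          = ν ({a | t < F a ^ (-α)} ∩ U) := Measure.restrict_apply' hUm
        _ ≤ ν {l ∈ U | F l ≤ r} := measure_mono hsub
        _ ≤ ENNReal.ofReal (c * C₁' * r ^ (u - d + 2)) := key r ⟨hr0, hrD⟩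
        _ = ENNReal.ofReal (c * C₁' * t ^ (-β)) := by
            rw [hrdef, ← Real.rpow_mul ht0.le]
            congr 2
            rw [hβdef]
            field_simp
    calc ∫⁻ t in Set.Ioi T, (ν.restrict U) {a | t < F a ^ (-α)}
        ≤ ∫⁻ t in Set.Ioi T, ENNReal.ofReal (c * C₁' * t ^ (-β)) := by
          refine setLIntegral_mono (by fun_prop) hbound
      _ = ENNReal.ofReal (∫ t in Set.Ioi T, c * C₁' * t ^ (-β)) := by
          rw [ofReal_integral_eq_lintegral_ofReal
            ((integrableOn_Ioi_rpow_of_lt (by linarith) hT).const_mul _)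
            ((ae_restrict_iff' measurableSet_Ioi).2 (Eventually.of_forall fun t ht =>
              mul_nonneg (mul_nonneg hc.le hC₁'.le)
                (Real.rpow_nonneg (hT.trans ht).le _)))]
      _ = ENNReal.ofReal (α * c * C₁' / (u - d + 2 - α) * D ^ (u - d + 2 - α)) := by
          rw [MeasureTheory.integral_const_mul, integral_Ioi_rpow_of_lt (by linarith) hT]
          congr 1
          have hTb : T ^ (-β + 1) = D ^ (u - d + 2 - α) := by
            rw [hTdef, ← Real.rpow_mul hD.le,
              show (-α) * (-β + 1) = α * β - α by ring, hαβ]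
          rw [hTb]
          have hne : u - (d:ℝ) + 2 - α ≠ 0 := by linarith
          have h2 : -β + 1 = -(u - (d:ℝ) + 2 - α) / α := by
            rw [hβdef]; field_simp; ring
          have h3 : -D ^ (u - (d:ℝ) + 2 - α) / (-(u - (d:ℝ) + 2 - α) / α)
              = D ^ (u - (d:ℝ) + 2 - α) * α / (u - (d:ℝ) + 2 - α) := by
            rw [div_div_eq_mul_div, div_neg, neg_mul, neg_div, neg_neg]
          rw [h2, h3]
          ring
  calc (∫⁻ t in Set.Ioc (0:ℝ) T, (ν.restrict U) {a | t < F a ^ (-α)})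
        + ∫⁻ t in Set.Ioi T, (ν.restrict U) {a | t < F a ^ (-α)}
      ≤ ENNReal.ofReal (D ^ (-α))
        + ENNReal.ofReal (α * c * C₁' / (u - d + 2 - α) * D ^ (u - d + 2 - α)) :=
        add_le_add part1 part2
    _ = _ := add_comm _ _
end

section
/- Lemma 3.18, specialized to expanding affine maps (derivative of the coding map in the parameter): Let U ⊆ ℂ be open and let a_i, b_i : U → ℂ (1 ≤ i ≤ m) be holomorphic with |a_i(λ)| > 1 for every i and λ ∈ U. For λ ∈ U set φ_{λ,i}(z) = (z − b_i(λ))/a_i(λ) and let π_λ : Σ_m → ℂ be the coding map π_λ(ω) = lim_{n→∞} φ_{λ,ω_1} ∘ ⋯ ∘ φ_{λ,ω_n}(0). Then for each ω ∈ Σ_m the map λ ↦ π_λ(ω) is holomorphic on U, and for every λ ∈ U its derivative equals d/dλ π_λ(ω) = − Σ_{n=1}^∞ (∏_{k=1}^{n} a_{ω_k}(λ))^{−1} · ( a′_{ω_n}(λ) · π_λ(σ^{n−1}ω) + b′_{ω_n}(λ) ), the series converging absolutely. -/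
open MeasureTheory Filter Set Metric ENNReal

open Topology

noncomputable def sTerm {m : ℕ} (a b : Fin m → ℂ) (ω : ℕ → Fin m) (j : ℕ) : ℂ :=
  (-(b (ω j))) / ∏ k ∈ Finset.range (j+1), a (ω k)

lemma affineIter_succ {m : ℕ} (a b : Fin m → ℂ) (ω : ℕ → Fin m) (n : ℕ) :
    affineIter a b ω (n+1)
      = (affineIter a b (fun k => ω (k+1)) n - b (ω 0)) / a (ω 0) := by
  simp only [affineIter, List.range_succ_eq_map, List.foldr_cons, List.foldr_map]

lemma affineIter_eq_sum {m : ℕ} (a b : Fin m → ℂ) (ω : ℕ → Fin m) (n : ℕ) :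
    affineIter a b ω n
      = ∑ j ∈ Finset.range n, (-(b (ω j))) / ∏ k ∈ Finset.range (j+1), a (ω k) := by
  induction n generalizing ω with
  | zero => simp [affineIter]
  | succ n ih =>
    rw [affineIter_succ, ih]
    rw [Finset.sum_range_succ' (fun j => (-(b (ω j))) / ∏ k ∈ Finset.range (j+1), a (ω k)) n]
    rw [sub_div, Finset.sum_div, sub_eq_add_neg]
    congr 1
    · refine Finset.sum_congr rfl fun j _ => ?_
      rw [div_div]
      congr 1
      rw [Finset.prod_range_succ' (fun k => a (ω k))]
    · simp [neg_div]

lemma prod_abs_ge {m : ℕ} (a : Fin m → ℂ) (ω : ℕ → Fin m) {ρ : ℝ}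
    (hρ : 0 ≤ ρ) (hA : ∀ i, ρ ≤ ‖a i‖) (n : ℕ) :
    ρ ^ n ≤ ‖∏ k ∈ Finset.range n, a (ω k)‖ := by
  rw [norm_prod]
  calc ρ ^ n = ∏ _k ∈ Finset.range n, ρ := by simp
  _ ≤ ∏ k ∈ Finset.range n, ‖a (ω k)‖ :=
    Finset.prod_le_prod (fun _ _ => hρ) (fun k _ => hA (ω k))

lemma sTerm_bound {m : ℕ} (a b : Fin m → ℂ) (ω : ℕ → Fin m) {ρ M : ℝ}
    (hρ : 1 < ρ) (hA : ∀ i, ρ ≤ ‖a i‖) (hM : ∀ i, ‖b i‖ ≤ M)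
    (hM0 : 0 ≤ M) (j : ℕ) :
    ‖sTerm a b ω j‖ ≤ M * (ρ⁻¹) ^ (j+1) := by
  have hρ0 : (0:ℝ) < ρ := lt_trans one_pos hρ
  have hp : (0:ℝ) < ρ ^ (j+1) := pow_pos hρ0 _
  have h1 : ρ ^ (j+1) ≤ ‖∏ k ∈ Finset.range (j+1), a (ω k)‖ :=
    prod_abs_ge a ω (le_of_lt hρ0) hA (j+1)
  have h2 : ‖sTerm a b ω j‖ ≤ ‖b (ω j)‖ / ρ ^ (j+1) := by
    rw [sTerm, norm_div, norm_neg]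
    exact div_le_div_of_nonneg_left (by positivity) hp h1
  calc ‖sTerm a b ω j‖ ≤ M / ρ ^ (j+1) :=
        h2.trans (div_le_div_of_nonneg_right (hM (ω j)) hp.le)
  _ = M * (ρ⁻¹) ^ (j+1) := by rw [inv_pow, div_eq_mul_inv]

lemma summable_sTerm {m : ℕ} (a b : Fin m → ℂ) (ω : ℕ → Fin m) {ρ M : ℝ}
    (hρ : 1 < ρ) (hA : ∀ i, ρ ≤ ‖a i‖) (hM : ∀ i, ‖b i‖ ≤ M)
    (hM0 : 0 ≤ M) : Summable (sTerm a b ω) := by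
  have hr : ρ⁻¹ < 1 := inv_lt_one_of_one_lt₀ hρ
  have hr0 : (0:ℝ) ≤ ρ⁻¹ := by positivity
  have hgeo : Summable (fun j : ℕ => M * (ρ⁻¹) ^ (j+1)) := by
    apply Summable.mul_left
    exact (summable_geometric_of_lt_one hr0 hr).comp_injective (add_left_injective 1)
  exact Summable.of_norm_bounded hgeo (sTerm_bound a b ω hρ hA hM hM0)

lemma codingMap_eq_tsum {m : ℕ} (a b : Fin m → ℂ) (ω : ℕ → Fin m) {ρ M : ℝ}
    (hρ : 1 < ρ) (hA : ∀ i, ρ ≤ ‖a i‖) (hM : ∀ i, ‖b i‖ ≤ M)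
    (hM0 : 0 ≤ M) :
    codingMap a b ω = ∑' j, sTerm a b ω j := by
  have hs := (summable_sTerm a b ω hρ hA hM hM0).hasSum.tendsto_sum_nat
  have heq : (fun n => ∑ j ∈ Finset.range n, sTerm a b ω j) = affineIter a b ω := by
    funext n; rw [affineIter_eq_sum]; rfl
  rw [heq] at hs
  exact hs.limUnder_eq

lemma codingMap_norm_le {m : ℕ} (a b : Fin m → ℂ) (ω : ℕ → Fin m) {ρ M : ℝ}
    (hρ : 1 < ρ) (hA : ∀ i, ρ ≤ ‖a i‖) (hM : ∀ i, ‖b i‖ ≤ M)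
    (hM0 : 0 ≤ M) :
    ‖codingMap a b ω‖ ≤ M * (1 - ρ⁻¹)⁻¹ := by
  have hr : ρ⁻¹ < 1 := inv_lt_one_of_one_lt₀ hρ
  have hr0 : (0:ℝ) ≤ ρ⁻¹ := by positivity
  rw [codingMap_eq_tsum a b ω hρ hA hM hM0]
  have h1 : ‖∑' j, sTerm a b ω j‖ ≤ ∑' j, ‖sTerm a b ω j‖ := norm_tsum_le_tsum_norm
    ((summable_sTerm a b ω hρ hA hM hM0).norm)
  refine h1.trans ?_
  have h2 : ∑' j, ‖sTerm a b ω j‖ ≤ ∑' j : ℕ, M * (ρ⁻¹)^j := by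
    refine Summable.tsum_le_tsum (fun j => ?_) ((summable_sTerm a b ω hρ hA hM hM0).norm)
      ((summable_geometric_of_lt_one hr0 hr).mul_left M)
    refine (sTerm_bound a b ω hρ hA hM hM0 j).trans ?_
    have := pow_le_pow_of_le_one hr0 hr.le (Nat.le_succ j)
    exact mul_le_mul_of_nonneg_left this hM0
  refine h2.trans ?_
  rw [tsum_mul_left, tsum_geometric_of_lt_one hr0 hr]

lemma tsum_algebra {m : ℕ} (α β α' β' : Fin m → ℂ) (ω : ℕ → Fin m) {ρ M A' B' : ℝ}
    (hρ : 1 < ρ) (hA : ∀ i, ρ ≤ ‖α i‖) (hM : ∀ i, ‖β i‖ ≤ M)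
    (hM0 : 0 ≤ M) (hA' : ∀ i, ‖α' i‖ ≤ A') (hB' : ∀ i, ‖β' i‖ ≤ B')
    (hA'0 : 0 ≤ A') (hB'0 : 0 ≤ B') :
    Summable (fun n : ℕ => ‖(∏ k ∈ Finset.range (n + 1), α (ω k))⁻¹ *
          (α' (ω n) * codingMap α β (fun k => ω (k + n)) + β' (ω n))‖) ∧
    (∑' j : ℕ, (-(β' (ω j)) / (∏ k ∈ Finset.range (j+1), α (ω k))
        + ∑ k ∈ Finset.range (j+1),
            α' (ω k) * β (ω j) / (α (ω k) * ∏ kk ∈ Finset.range (j+1), α (ω kk))))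
      = - ∑' n : ℕ, (∏ k ∈ Finset.range (n + 1), α (ω k))⁻¹ *
          (α' (ω n) * codingMap α β (fun k => ω (k + n)) + β' (ω n)) := by
  have hρ0 : (0:ℝ) < ρ := lt_trans one_pos hρ
  have hr : ρ⁻¹ < 1 := inv_lt_one_of_one_lt₀ hρ
  have hr0 : (0:ℝ) ≤ ρ⁻¹ := by positivity
  set r : ℝ := ρ⁻¹ with hrdef
  set P : ℕ → ℂ := fun n => ∏ k ∈ Finset.range n, α (ω k) with hPdef
  have hPabs : ∀ n, ρ ^ n ≤ ‖P n‖ := fun n => prod_abs_ge α ω hρ0.le hA n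
  have hPne : ∀ n, P n ≠ 0 := by
    intro n h
    have := hPabs n
    rw [h] at this
    simp only [norm_zero] at this
    nlinarith [pow_pos hρ0 n]
  have hαne : ∀ i, α i ≠ 0 := by
    intro i h
    have := hA i; rw [h] at this; simp at this; nlinarith
  have hPinv : ∀ n, (‖P n‖)⁻¹ ≤ r ^ n := by
    intro n
    rw [hrdef, inv_pow]
    exact inv_anti₀ (pow_pos hρ0 n) (hPabs n)
  have hαinv : ∀ i, (‖α i‖)⁻¹ ≤ 1 := by
    intro i
    rw [inv_le_one_iff₀]
    right; exact le_trans hρ.le (hA i)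
  -- the double-indexed family
  set g : ℕ → ℕ → ℂ := fun k n => α' (ω k) * β (ω n) / (α (ω k) * P (n+1)) with hgdef
  have hg_bd : ∀ k n, ‖g k n‖ ≤ A' * M * r ^ (n+1) := by
    intro k n
    rw [hgdef]
    simp only [norm_div, norm_mul]
    rw [div_eq_mul_inv, mul_inv]
    calc ‖α' (ω k)‖ * ‖β (ω n)‖ *
          ((‖α (ω k)‖)⁻¹ * (‖P (n+1)‖)⁻¹)
        ≤ A' * M * (1 * r ^ (n+1)) := by
          refine mul_le_mul (mul_le_mul (hA' _) (hM _) (by positivity) hA'0)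
            (mul_le_mul (hαinv _) (hPinv _) (by positivity) zero_le_one) (by positivity)
            (by positivity)
      _ = A' * M * r ^ (n+1) := by ring
  set G : ℕ × ℕ → ℂ := fun p => g p.1 (p.1 + p.2) with hGdef
  have hgeo2 : Summable (fun p : ℕ × ℕ => (A' * M * r) * (r ^ p.1 * r ^ p.2)) :=
    (((summable_geometric_of_lt_one hr0 hr).mul_of_nonneg
      (summable_geometric_of_lt_one hr0 hr) (fun n => by positivity)
      (fun n => by positivity))).mul_left _
  have hG : Summable G := by
    refine Summable.of_norm_bounded hgeo2 (fun p => ?_)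
    have := hg_bd p.1 (p.1 + p.2)
    calc ‖G p‖ ≤ A' * M * r ^ (p.1 + p.2 + 1) := this
      _ = (A' * M * r) * (r ^ p.1 * r ^ p.2) := by rw [pow_add, pow_add]; ring
  set H : ℕ × ℕ → ℂ := fun p => if p.2 ≤ p.1 then g p.2 p.1 else 0 with hHdef
  set ι : ℕ × ℕ → ℕ × ℕ := fun p => (p.1 + p.2, p.1) with hιdef
  have hιinj : Function.Injective ι := by
    intro p q h
    rw [hιdef] at h
    simp only [Prod.mk.injEq] at h
    obtain ⟨h1, h2⟩ := h
    exact Prod.ext h2 (by omega)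
  have hHι : H ∘ ι = G := by
    funext p
    simp only [hHdef, hιdef, hGdef, Function.comp_apply]
    rw [if_pos (Nat.le_add_right _ _)]
  have hHsupp : ∀ p ∉ Set.range ι, H p = 0 := by
    intro p hp
    rw [hHdef]
    by_cases h : p.2 ≤ p.1
    · exact absurd ⟨(p.2, p.1 - p.2), by simp [hιdef, Nat.add_sub_cancel' h]⟩ hp
    · simp [h]
  have hH : Summable H := (hιinj.summable_iff hHsupp).1 (by rw [hHι]; exact hG)
  have htsumHG : ∑' p, H p = ∑' p, G p := by
    rw [← hιinj.tsum_eq (Function.support_subset_iff'.2 hHsupp)]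
    exact tsum_congr fun p => by rw [← hHι]; rfl
  -- fibers
  have hHfib : ∀ n, ∑' k, H (n, k) = ∑ k ∈ Finset.range (n+1), g k n := by
    intro n
    rw [tsum_eq_sum (s := Finset.range (n+1))
      (fun k hk => by
        rw [hHdef]; simp only
        rw [if_neg (by simpa [Nat.lt_succ_iff] using hk)])]
    refine Finset.sum_congr rfl fun k hk => ?_
    rw [hHdef]; simp only
    rw [if_pos (by simpa [Nat.lt_succ_iff] using hk)]
  -- shifted coding maps
  set pn : ℕ → ℂ := fun n => codingMap α β (fun k => ω (k + n)) with hπdef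
  have hπ_eq : ∀ n, pn n = ∑' j, sTerm α β (fun k => ω (k + n)) j := fun n =>
    codingMap_eq_tsum α β _ hρ hA hM hM0
  have hE3 : ∀ n, ∑' j, G (n, j) = -((P (n+1))⁻¹ * (α' (ω n) * pn n)) := by
    intro n
    have hc : -((P (n+1))⁻¹ * α' (ω n)) * pn n
        = ∑' j, (-((P (n+1))⁻¹ * α' (ω n)) * sTerm α β (fun k => ω (k + n)) j) := by
      rw [hπ_eq n, tsum_mul_left]
    rw [show -((P (n+1))⁻¹ * (α' (ω n) * pn n)) = -((P (n+1))⁻¹ * α' (ω n)) * pn n by ring,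
      hc]
    refine tsum_congr fun j => ?_
    have hQ : (∏ k ∈ Finset.range (j+1), α (ω (k + n)))
        = ∏ k ∈ Finset.range (j+1), α (ω (n + k)) :=
      Finset.prod_congr rfl (fun k _ => by rw [add_comm])
    have hQne : (∏ k ∈ Finset.range (j+1), α (ω (k + n))) ≠ 0 :=
      Finset.prod_ne_zero_iff.2 fun k _ => hαne _
    have hPadd : P (n + (j+1)) = P n * ∏ k ∈ Finset.range (j+1), α (ω (n + k)) := by
      rw [hPdef]; exact Finset.prod_range_add _ n (j+1)
    have hPsucc : P (n+1) = P n * α (ω n) := by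
      rw [hPdef]; exact Finset.prod_range_succ _ n
    have hGnj : G (n, j) = α' (ω n) * β (ω (n + j)) / (α (ω n) * P (n + (j+1))) := rfl
    have hQne' : (∏ k ∈ Finset.range (j+1), α (ω (n + k))) ≠ 0 :=
      Finset.prod_ne_zero_iff.2 fun k _ => hαne _
    simp only [sTerm]
    rw [hGnj, hPadd, hPsucc, show ω (j + n) = ω (n + j) from by rw [add_comm], hQ]
    field_simp
  -- summability facts
  have hgeo1 : Summable (fun j : ℕ => r ^ (j+1)) :=
    (summable_geometric_of_lt_one hr0 hr).comp_injective (add_left_injective 1)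
  have sB : Summable (fun j => -(β' (ω j)) / P (j+1)) := by
    refine Summable.of_norm_bounded (hgeo1.mul_left B') (fun j => ?_)
    have : ‖-(β' (ω j)) / P (j+1)‖ = ‖β' (ω j)‖ * (‖P (j+1)‖)⁻¹ := by
      rw [norm_div, norm_neg, div_eq_mul_inv]
    rw [this]
    exact mul_le_mul (hB' _) (hPinv _) (by positivity) hB'0
  have sHfib : Summable (fun n => ∑' k, H (n, k)) :=
    ⟨_, hH.hasSum.prod_fiberwise (fun n => (hH.prod_factor n).hasSum)⟩
  have sI : Summable (fun n => ∑ k ∈ Finset.range (n+1), g k n) := sHfib.congr hHfib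
  have hGfibS : HasSum (fun n => ∑' j, G (n, j)) (∑' p, G p) :=
    hG.hasSum.prod_fiberwise (fun n => (hG.prod_factor n).hasSum)
  have hsum1 : Summable (fun n => -((P (n+1))⁻¹ * (α' (ω n) * pn n))) :=
    hGfibS.summable.congr hE3
  -- bound on the coding maps
  have hpn_bd : ∀ n, ‖pn n‖ ≤ M * (1 - r)⁻¹ := fun n =>
    codingMap_norm_le α β _ hρ hA hM hM0
  have hCπ0 : (0:ℝ) ≤ M * (1 - r)⁻¹ := by
    have : (0:ℝ) < 1 - r := by linarith
    positivity
  -- bullet 1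
  have bullet1 : Summable (fun n : ℕ => ‖(P (n+1))⁻¹ * (α' (ω n) * pn n + β' (ω n))‖) := by
    refine Summable.of_nonneg_of_le (fun n => norm_nonneg _) (fun n => ?_)
      (hgeo1.mul_left (A' * (M * (1 - r)⁻¹) + B'))
    rw [norm_mul, norm_inv]
    rw [mul_comm (A' * (M * (1 - r)⁻¹) + B') (r ^ (n+1))]
    refine mul_le_mul (hPinv _) ?_ (norm_nonneg _) (by positivity)
    calc ‖α' (ω n) * pn n + β' (ω n)‖
        ≤ ‖α' (ω n) * pn n‖ + ‖β' (ω n)‖ := norm_add_le _ _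
      _ ≤ A' * (M * (1 - r)⁻¹) + B' := by
          rw [norm_mul]
          exact add_le_add (mul_le_mul (hA' _) (hpn_bd n) (norm_nonneg _) hA'0)
            (hB' _)
  have sT : Summable (fun n => (P (n+1))⁻¹ * (α' (ω n) * pn n + β' (ω n))) := by
    refine Summable.of_norm ?_
    exact bullet1
  -- final assembly
  have hIpart : ∑' j, ∑ k ∈ Finset.range (j+1), g k j
      = ∑' n, -((P (n+1))⁻¹ * (α' (ω n) * pn n)) := by
    calc ∑' j, ∑ k ∈ Finset.range (j+1), g k j = ∑' j, ∑' k, H (j, k) :=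
          (tsum_congr hHfib).symm
      _ = ∑' p, H p := (Summable.tsum_prod' hH (fun n => hH.prod_factor n)).symm
      _ = ∑' p, G p := htsumHG
      _ = ∑' n, ∑' j, G (n, j) := Summable.tsum_prod' hG (fun n => hG.prod_factor n)
      _ = ∑' n, -((P (n+1))⁻¹ * (α' (ω n) * pn n)) := tsum_congr hE3
  have final : (∑' j : ℕ, (-(β' (ω j)) / P (j+1) + ∑ k ∈ Finset.range (j+1), g k j))
      = - ∑' n : ℕ, (P (n+1))⁻¹ * (α' (ω n) * pn n + β' (ω n)) := by
    rw [Summable.tsum_add sB sI, hIpart, ← tsum_neg]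
    rw [show (fun n => -((P (n+1))⁻¹ * (α' (ω n) * pn n + β' (ω n))))
        = fun n => -((P (n+1))⁻¹ * (α' (ω n) * pn n)) + -(β' (ω n)) / P (n+1) from
      funext fun n => by field_simp; ring]
    rw [Summable.tsum_add hsum1 sB]
    exact add_comm _ _
  constructor
  · have := bullet1
    simp only [hPdef, hπdef] at this
    exact this
  · have := final
    simp only [hPdef, hgdef, hπdef] at this
    exact this

lemma key {m : ℕ} (hm : 2 ≤ m) (U : Set ℂ) (hUo : IsOpen U)
    (a b : ℂ → Fin m → ℂ)
    (ha : ∀ i, DifferentiableOn ℂ (fun l => a l i) U)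
    (hb : ∀ i, DifferentiableOn ℂ (fun l => b l i) U)
    (haexp : ∀ l ∈ U, ∀ i, 1 < ‖a l i‖) (ω : ℕ → Fin m) (l : ℂ) (hl : l ∈ U) :
    Summable (fun n : ℕ => ‖(∏ k ∈ Finset.range (n + 1), a l (ω k))⁻¹ *
          (deriv (fun μ => a μ (ω n)) l * codingMap (a l) (b l) (fun k => ω (k + n))
            + deriv (fun μ => b μ (ω n)) l)‖) ∧
    HasDerivAt (fun μ => codingMap (a μ) (b μ) ω)
      (- ∑' n : ℕ, (∏ k ∈ Finset.range (n + 1), a l (ω k))⁻¹ *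
        (deriv (fun μ => a μ (ω n)) l * codingMap (a l) (b l) (fun k => ω (k + n))
          + deriv (fun μ => b μ (ω n)) l)) l := by
  have hi0 : Fin m := ⟨0, by omega⟩
  -- choose ρ
  obtain ⟨iMin, -, hiMin⟩ := Finset.exists_min_image Finset.univ
    (fun i => ‖a l i‖) ⟨hi0, Finset.mem_univ _⟩
  have hc1 : 1 < ‖a l iMin‖ := haexp l hl iMin
  set ρ : ℝ := (1 + ‖a l iMin‖) / 2 with hρdef
  have hρ1 : 1 < ρ := by rw [hρdef]; linarith
  have hρc : ∀ i, ρ < ‖a l i‖ := by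
    intro i
    have := hiMin i (Finset.mem_univ i)
    rw [hρdef]; linarith
  -- choose M
  obtain ⟨M₀, hM₀⟩ := Finite.exists_le (fun i => ‖b l i‖)
  set M : ℝ := M₀ + 1 with hMdef
  have hMl : ∀ i, ‖b l i‖ < M := fun i => by
    have := hM₀ i; rw [hMdef]; linarith
  have hM0 : 0 ≤ M := le_trans (norm_nonneg _) (hMl hi0).le
  -- continuity
  have hacont : ∀ i, ContinuousAt (fun μ => ‖a μ i‖) l := fun i =>
    continuous_norm.continuousAt.comp
      ((ha i).differentiableAt (hUo.mem_nhds hl)).continuousAt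
  have hbcont : ∀ i, ContinuousAt (fun μ => ‖b μ i‖) l := fun i =>
    continuous_norm.continuousAt.comp
      ((hb i).differentiableAt (hUo.mem_nhds hl)).continuousAt
  have hev : ∀ᶠ μ in 𝓝 l,
      ((∀ i, ρ < ‖a μ i‖) ∧ (∀ i, ‖b μ i‖ < M)) ∧ μ ∈ U := by
    refine Filter.Eventually.and (Filter.Eventually.and ?_ ?_) (hUo.eventually_mem hl)
    · exact eventually_all.2 fun i => (hacont i).eventually (eventually_gt_nhds (hρc i))
    · exact eventually_all.2 fun i => (hbcont i).eventually (eventually_lt_nhds (hMl i))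
  rw [Metric.eventually_nhds_iff] at hev
  obtain ⟨ε, hε0, hball⟩ := hev
  have hVo : IsOpen (Metric.ball l ε) := Metric.isOpen_ball
  have hlV : l ∈ Metric.ball l ε := Metric.mem_ball_self hε0
  have hVP : ∀ μ ∈ Metric.ball l ε,
      (∀ i, ρ ≤ ‖a μ i‖) ∧ (∀ i, ‖b μ i‖ ≤ M) ∧ μ ∈ U := by
    intro μ hμ
    have h := hball (Metric.mem_ball.1 hμ)
    exact ⟨fun i => (h.1.1 i).le, fun i => (h.1.2 i).le, h.2⟩
  have hVU : Metric.ball l ε ⊆ U := fun μ hμ => (hVP μ hμ).2.2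
  -- derivative bounds at l
  obtain ⟨A', hA'⟩ := Finite.exists_le (fun i => ‖deriv (fun μ => a μ i) l‖)
  obtain ⟨B', hB'⟩ := Finite.exists_le (fun i => ‖deriv (fun μ => b μ i) l‖)
  have hA'0 : 0 ≤ A' := le_trans (norm_nonneg _) (hA' hi0)
  have hB'0 : 0 ≤ B' := le_trans (norm_nonneg _) (hB' hi0)
  -- series of holomorphic functions
  have hr : ρ⁻¹ < 1 := inv_lt_one_of_one_lt₀ hρ1
  have hr0 : (0:ℝ) ≤ ρ⁻¹ := by positivity
  have hu : Summable (fun j : ℕ => M * (ρ⁻¹) ^ (j+1)) :=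
    ((summable_geometric_of_lt_one hr0 hr).comp_injective (add_left_injective 1)).mul_left _
  have haneV : ∀ μ ∈ Metric.ball l ε, ∀ i, a μ i ≠ 0 := by
    intro μ hμ i h
    have := (hVP μ hμ).1 i
    rw [h] at this; simp only [norm_zero] at this; linarith
  have hdiffj : ∀ j : ℕ, DifferentiableOn ℂ
      (fun μ => sTerm (a μ) (b μ) ω j) (Metric.ball l ε) := by
    intro j
    refine DifferentiableOn.div (((hb (ω j)).mono hVU).neg)
      (DifferentiableOn.fun_finset_prod (fun k _ => (ha (ω k)).mono hVU)) ?_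
    intro μ hμ
    exact Finset.prod_ne_zero_iff.2 fun k _ => haneV μ hμ (ω k)
  have hle : ∀ (j:ℕ) (μ : ℂ), μ ∈ Metric.ball l ε →
      ‖sTerm (a μ) (b μ) ω j‖ ≤ M * (ρ⁻¹) ^ (j+1) := fun j μ hμ =>
    sTerm_bound _ _ _ hρ1 (hVP μ hμ).1 (hVP μ hμ).2.1 hM0 j
  have hDF := Complex.differentiableOn_tsum_of_summable_norm hu hdiffj hVo hle
  have hHS := Complex.hasSum_deriv_of_summable_norm hu hdiffj hVo hle hlV
  have hcongr : (fun μ => codingMap (a μ) (b μ) ω)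
      =ᶠ[𝓝 l] (fun μ => ∑' j, sTerm (a μ) (b μ) ω j) := by
    filter_upwards [hVo.mem_nhds hlV] with μ hμ
    exact codingMap_eq_tsum _ _ _ hρ1 (hVP μ hμ).1 (hVP μ hμ).2.1 hM0
  have hdF : HasDerivAt (fun μ => ∑' j, sTerm (a μ) (b μ) ω j)
      (deriv (fun μ => ∑' j, sTerm (a μ) (b μ) ω j) l) l :=
    ((hDF l hlV).differentiableAt (hVo.mem_nhds hlV)).hasDerivAt
  -- term-by-term derivatives
  have hda : ∀ i, HasDerivAt (fun μ => a μ i) (deriv (fun μ => a μ i) l) l := fun i =>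
    ((ha i).differentiableAt (hUo.mem_nhds hl)).hasDerivAt
  have hdb : ∀ i, HasDerivAt (fun μ => b μ i) (deriv (fun μ => b μ i) l) l := fun i =>
    ((hb i).differentiableAt (hUo.mem_nhds hl)).hasDerivAt
  have hαne : ∀ i, a l i ≠ 0 := haneV l hlV
  have hPne : ∀ n, (∏ k ∈ Finset.range n, a l (ω k)) ≠ 0 := fun n =>
    Finset.prod_ne_zero_iff.2 fun k _ => hαne _
  have hProd : ∀ n : ℕ, HasDerivAt (fun μ => ∏ k ∈ Finset.range n, a μ (ω k))
      ((∏ k ∈ Finset.range n, a l (ω k)) *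
        ∑ k ∈ Finset.range n, deriv (fun μ => a μ (ω k)) l / a l (ω k)) l := by
    intro n
    induction n with
    | zero => simpa using hasDerivAt_const l (1:ℂ)
    | succ n ih =>
      have h := ih.fun_mul (hda (ω n))
      simp only [Finset.prod_range_succ]
      refine h.congr_deriv ?_
      symm
      rw [Finset.sum_range_succ]
      have hcan : a l (ω n) * (deriv (fun μ => a μ (ω n)) l / a l (ω n))
          = deriv (fun μ => a μ (ω n)) l := by
        rw [mul_comm, div_mul_cancel₀ _ (hαne (ω n))]
      linear_combination (∏ k ∈ Finset.range n, a l (ω k)) * hcan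
  have hderivS : ∀ j, deriv (fun μ => sTerm (a μ) (b μ) ω j) l
      = -(deriv (fun μ => b μ (ω j)) l) / (∏ k ∈ Finset.range (j+1), a l (ω k))
        + ∑ k ∈ Finset.range (j+1), deriv (fun μ => a μ (ω k)) l * b l (ω j) /
            (a l (ω k) * ∏ kk ∈ Finset.range (j+1), a l (ω kk)) := by
    intro j
    have hd : HasDerivAt (fun μ => sTerm (a μ) (b μ) ω j)
        ((-(deriv (fun μ => b μ (ω j)) l) * (∏ k ∈ Finset.range (j+1), a l (ω k))
          - (-(b l (ω j))) * ((∏ k ∈ Finset.range (j+1), a l (ω k)) *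
              ∑ k ∈ Finset.range (j+1), deriv (fun μ => a μ (ω k)) l / a l (ω k)))
          / (∏ k ∈ Finset.range (j+1), a l (ω k)) ^ 2) l :=
      ((hdb (ω j)).neg).div (hProd (j+1)) (hPne (j+1))
    rw [hd.deriv]
    have hsum_eq : ∑ k ∈ Finset.range (j+1), deriv (fun μ => a μ (ω k)) l * b l (ω j) /
          (a l (ω k) * ∏ kk ∈ Finset.range (j+1), a l (ω kk))
        = b l (ω j) * (∑ k ∈ Finset.range (j+1), deriv (fun μ => a μ (ω k)) l / a l (ω k))
            / ∏ kk ∈ Finset.range (j+1), a l (ω kk) := by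
      rw [Finset.mul_sum, Finset.sum_div]
      refine Finset.sum_congr rfl fun k _ => ?_
      field_simp [hαne (ω k), hPne (j+1)]
    rw [hsum_eq]
    field_simp [hPne (j+1)]
    ring
  -- apply the algebraic identity
  obtain ⟨bul1, halg⟩ := tsum_algebra (a l) (b l)
    (fun i => deriv (fun μ => a μ i) l) (fun i => deriv (fun μ => b μ i) l) ω
    hρ1 (hVP l hlV).1 (hVP l hlV).2.1 hM0 hA' hB' hA'0 hB'0
  refine ⟨bul1, ?_⟩
  have hval : deriv (fun μ => ∑' j, sTerm (a μ) (b μ) ω j) l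
      = - ∑' n : ℕ, (∏ k ∈ Finset.range (n + 1), a l (ω k))⁻¹ *
          (deriv (fun μ => a μ (ω n)) l * codingMap (a l) (b l) (fun k => ω (k + n))
            + deriv (fun μ => b μ (ω n)) l) := by
    rw [← hHS.tsum_eq, tsum_congr hderivS]
    exact halg
  rw [← hval]
  exact hdF.congr_of_eventuallyEq hcongr

/-- **Lemma 3.18** (expanding affine case): derivative of the coding map in the parameter.
For holomorphic coefficient maps `a_i, b_i : U → ℂ` on an open `U ⊆ ℂ` with `|a_i(λ)| > 1`,
the map `λ ↦ π_λ(ω)` is holomorphic on `U` and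
`d/dλ π_λ(ω) = - ∑_{n≥1} (∏_{k=1}^n a_{ω_k}(λ))⁻¹ (a'_{ω_n}(λ) π_λ(σ^{n-1}ω) + b'_{ω_n}(λ))`,
the series converging absolutely. (Indices below are 0-based: `ω 0 = ω_1`.) -/
theorem stmt11 {m : ℕ} (hm : 2 ≤ m) (U : Set ℂ) (hUo : IsOpen U)
    (a b : ℂ → Fin m → ℂ)
    (ha : ∀ i, DifferentiableOn ℂ (fun l => a l i) U)
    (hb : ∀ i, DifferentiableOn ℂ (fun l => b l i) U)
    (haexp : ∀ l ∈ U, ∀ i, 1 < ‖a l i‖) :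
    ∀ ω : ℕ → Fin m,
      DifferentiableOn ℂ (fun l => codingMap (a l) (b l) ω) U ∧
      ∀ l ∈ U,
        Summable (fun n : ℕ => ‖((∏ k ∈ Finset.range (n + 1), a l (ω k))⁻¹ *
            (deriv (fun μ => a μ (ω n)) l * codingMap (a l) (b l) (fun k => ω (k + n))
              + deriv (fun μ => b μ (ω n)) l))‖) ∧
        HasDerivAt (fun μ => codingMap (a μ) (b μ) ω)
          (- ∑' n : ℕ, (∏ k ∈ Finset.range (n + 1), a l (ω k))⁻¹ *
            (deriv (fun μ => a μ (ω n)) l * codingMap (a l) (b l) (fun k => ω (k + n))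
              + deriv (fun μ => b μ (ω n)) l)) l := by
  refine fun ω => ⟨fun l hl => ((key hm U hUo a b ha hb haexp ω l hl).2.differentiableAt).differentiableWithinAt,
    fun l hl => ⟨(key hm U hUo a b ha hb haexp ω l hl).1, (key hm U hUo a b ha hb haexp ω l hl).2⟩⟩
end

section
/- Key derivative estimates from the proof of Theorem 4.3: Let a ∈ ℂ with |a| > 1, let f_1(z) = az² and f_2(z) = z², and for n ≥ 1 set F_n = f_2^{∘(n−1)} ∘ f_1 (so F_1 = f_1). Then for every z ∈ ℂ with |z| = |a|^{−1/2}: (a) |F_n′(z)| = 2^n |a|^{1/2} for every n ≥ 1; (b) the series Σ_{n=2}^∞ 1/F_n′(z) converges absolutely and |Σ_{n=2}^∞ 1/F_n′(z)| ≤ |a|^{−1/2}/2; and (c) −1/(2z) + Σ_{n=2}^∞ 1/F_n′(z) ≠ 0. -/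
/-- `Fn a n = f₂^{∘(n-1)} ∘ f₁` where `f₁(z) = a z²` and `f₂(z) = z²`; so `Fn a 1 = f₁`. -/
noncomputable def Fn (a : ℂ) (n : ℕ) (z : ℂ) : ℂ :=
  (fun w : ℂ => w ^ 2)^[n - 1] (a * z ^ 2)

lemma iter_sq (k : ℕ) (x : ℂ) : (fun w : ℂ => w ^ 2)^[k] x = x ^ (2 ^ k) := by
  induction k with
  | zero => simp
  | succ k ih => rw [Function.iterate_succ_apply', ih, ← pow_mul, pow_succ]

lemma hasDerivAt_Fn (a : ℂ) (n : ℕ) (z : ℂ) :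
    HasDerivAt (Fn a n)
      ((2 ^ (n - 1) : ℕ) * (a * z ^ 2) ^ (2 ^ (n - 1) - 1) * (a * (2 * z))) z := by
  have h1 : HasDerivAt (fun z : ℂ => a * z ^ 2) (a * (2 * z)) z := by
    simpa using (hasDerivAt_pow 2 z).const_mul a
  have h2 := (hasDerivAt_pow (2 ^ (n - 1)) (a * z ^ 2)).comp z h1
  have hfn : Fn a n = ((fun x : ℂ => x ^ 2 ^ (n - 1)) ∘ fun z : ℂ => a * z ^ 2) := by
    funext w
    simp [Fn, iter_sq, Function.comp]
  rw [hfn]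
  simpa [mul_assoc] using h2

/-- **Key derivative estimates from the proof of Theorem 4.3.** Let `|a| > 1`,
`f₁(z) = az²`, `f₂(z) = z²` and `F_n = f₂^{∘(n-1)} ∘ f₁`. Then for `|z| = |a|^{-1/2}`:
(a) `|F_n′(z)| = 2^n |a|^{1/2}` for all `n ≥ 1`;
(b) `∑_{n≥2} 1/F_n′(z)` converges absolutely and `|∑_{n≥2} 1/F_n′(z)| ≤ |a|^{-1/2}/2`;
(c) `-1/(2z) + ∑_{n≥2} 1/F_n′(z) ≠ 0`. -/
theorem stmt19 (a : ℂ) (ha : 1 < ‖a‖)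
    (z : ℂ) (hz : ‖z‖ = ‖a‖ ^ (-(1:ℝ)/2)) :
    (∀ n : ℕ, 1 ≤ n →
      ‖deriv (Fn a n) z‖ = 2 ^ n * ‖a‖ ^ ((1:ℝ)/2)) ∧
    Summable (fun n : ℕ => ‖(deriv (Fn a (n + 2)) z)⁻¹‖) ∧
    ‖∑' n : ℕ, (deriv (Fn a (n + 2)) z)⁻¹‖
      ≤ ‖a‖ ^ (-(1:ℝ)/2) / 2 ∧
    -1 / (2 * z) + ∑' n : ℕ, (deriv (Fn a (n + 2)) z)⁻¹ ≠ 0 := by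
  set A := ‖a‖ with hA
  have hA0 : (0:ℝ) < A := lt_trans one_pos ha
  set s : ℝ := A ^ ((1:ℝ)/2) with hs
  set t : ℝ := A ^ (-(1:ℝ)/2) with ht
  have hs0 : 0 < s := Real.rpow_pos_of_pos hA0 _
  have ht0 : 0 < t := Real.rpow_pos_of_pos hA0 _
  have hst : s * t = 1 := by
    rw [hs, ht, ← Real.rpow_add hA0]; norm_num
  have hss : s * s = A := by
    rw [hs, ← Real.rpow_add hA0]; norm_num [Real.rpow_one]
  have htt : t * t = A⁻¹ := by
    rw [ht, ← Real.rpow_add hA0]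
    norm_num [Real.rpow_neg_one]
  have hAt : A * t = s := by
    rw [← hss, mul_assoc, hst, mul_one]
  have haz : ‖a * z ^ 2‖ = 1 := by
    rw [norm_mul, norm_pow, hz, sq, htt]
    exact mul_inv_cancel₀ (ne_of_gt hA0)
  -- part (a)
  have parta : ∀ n : ℕ, 1 ≤ n →
      ‖deriv (Fn a n) z‖ = 2 ^ n * s := by
    intro n hn
    rw [(hasDerivAt_Fn a n z).deriv]
    rw [norm_mul, norm_mul, norm_pow, haz, one_pow, mul_one, norm_mul, norm_mul,
      Complex.norm_natCast, Complex.norm_two, hz]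
    push_cast
    rw [show ‖a‖ * (2 * t) = 2 * s by rw [← hA]; linear_combination 2 * hAt]
    rw [← mul_assoc, ← pow_succ, Nat.sub_add_cancel hn]
  have hterm : ∀ n : ℕ, ‖(deriv (Fn a (n + 2)) z)⁻¹‖
      = (t / 4) * (1 / 2) ^ n := by
    intro n
    rw [norm_inv, parta (n + 2) (by omega)]
    have h2 : (2:ℝ) ^ (n + 2) = 4 * 2 ^ n := by ring
    have hts : t = s⁻¹ := by
      field_simp
      linarith [hst]
    rw [h2, hts]
    rw [mul_inv, div_pow, one_pow]
    field_simp
  have hsummable : Summable (fun n : ℕ => ‖(deriv (Fn a (n + 2)) z)⁻¹‖) := by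
    rw [show (fun n : ℕ => ‖(deriv (Fn a (n + 2)) z)⁻¹‖)
        = fun n : ℕ => (t / 4) * (1 / 2) ^ n from funext hterm]
    exact (summable_geometric_of_lt_one (by norm_num) (by norm_num)).mul_left _
  have htsum_abs : (∑' n : ℕ, ‖(deriv (Fn a (n + 2)) z)⁻¹‖) = t / 2 := by
    rw [show (fun n : ℕ => ‖(deriv (Fn a (n + 2)) z)⁻¹‖)
        = fun n : ℕ => (t / 4) * (1 / 2) ^ n from funext hterm]
    rw [tsum_mul_left, tsum_geometric_of_lt_one (by norm_num) (by norm_num)]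
    ring
  have hbound : ‖∑' n : ℕ, (deriv (Fn a (n + 2)) z)⁻¹‖ ≤ t / 2 := by
    rw [← htsum_abs]
    simpa using
      norm_tsum_le_tsum_norm (f := fun n : ℕ => (deriv (Fn a (n + 2)) z)⁻¹)
        (by simpa using hsummable)
  refine ⟨parta, hsummable, hbound, ?_⟩
  -- part (c)
  intro hcontra
  have hz0 : z ≠ 0 := by
    intro h
    rw [h, norm_zero] at hz
    exact absurd hz.symm (ne_of_gt ht0)
  have hS : (∑' n : ℕ, (deriv (Fn a (n + 2)) z)⁻¹) = 1 / (2 * z) := by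
    have := hcontra
    field_simp at this ⊢
    linear_combination this
  have habs : ‖1 / (2 * z)‖ = s / 2 := by
    rw [norm_div, norm_one, norm_mul, Complex.norm_two, hz]
    have ht0' : t ≠ 0 := ne_of_gt ht0
    field_simp
    nlinarith [hst]
  rw [hS, habs] at hbound
  have hts' : t < s := by
    rw [ht, hs]
    exact Real.rpow_lt_rpow_left_iff ha |>.mpr (by norm_num)
  linarith
end
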